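/- arXiv:1603.00946 — 4 statements merged into one kernel-verified Lean document; each statement's English description precedes it below -/
import Mathlib

section
/- Let N ≥ 1 and let (A,Ω) be a relative fractal drum in ℝ^N. Let D ∈ ℝ with D ≤ N, let M > 0, α > 0, m ∈ ℕ, and assume |A_t ∩ Ω| = t^{N−D}(log(1/t))^m (M + O(t^α)) as t → 0⁺; precisely, there exist C > 0 and t₀ ∈ (0,1) such that | |A_t ∩ Ω| − M·t^{N−D}(log(1/t))^m | ≤ C·t^{N−D+α}(log(1/t))^m for all t ∈ (0,t₀). Then for every δ > 0 there exists a function H : ℂ → ℂ, holomorphic on the open half-plane {Re s > D−α}, such that for every s ∈ ℂ with Re s > D: the function t ↦ t^{s−N−1}|A_t ∩ Ω| is integrable on (0,δ) and ∫_0^δ t^{s−N−1}|A_t ∩ Ω| dt = m!·M·(s−D)^{−(m+1)} + H(s). In particular, the relative tube zeta function ζ̃_{A,Ω}(·;δ) has a meromorphic continuation to {Re s > D−α} whose only pole there is s = D, of order m+1, with Laurent coefficients c_{−m−1} = m!·M and c_{−m} = ⋯ = c_{−1} = 0. -/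
open MeasureTheory Metric Filter Set Real Complex Asymptotics
open scoped ENNReal Topology

lemma logm_O (m : ℕ) : ∀ ε : ℝ, 0 < ε →
    (fun t : ℝ => (-Real.log t) ^ m) =O[𝓝[>] (0:ℝ)] fun t => t ^ (-ε) := by
  induction m with
  | zero =>
    intro ε hε
    rw [isBigO_iff]
    refine ⟨1, ?_⟩
    filter_upwards [Ioo_mem_nhdsGT (zero_lt_one : (0:ℝ) < 1)] with t ht
    have h1 : (1:ℝ) ≤ t ^ (-ε) :=
      Real.one_le_rpow_of_pos_of_le_one_of_nonpos ht.1 ht.2.le (by linarith)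
    simp only [pow_zero, norm_one, Real.norm_eq_abs, one_mul,
      _root_.abs_of_nonneg (Real.rpow_nonneg ht.1.le _)]
    exact h1
  | succ m ih =>
    intro ε hε
    have h1 : (fun t : ℝ => Real.log t • ((-Real.log t) ^ m)) =O[𝓝[>] (0:ℝ)]
        fun t => t ^ (-ε) :=
      isBigO_rpow_zero_log_smul (by linarith : ε/2 < ε) (ih (ε/2) (by linarith))
    have h2 : (fun t : ℝ => (-Real.log t) ^ (m+1)) =
        fun t : ℝ => -(Real.log t • ((-Real.log t) ^ m)) := by
      funext t; simp only [smul_eq_mul, pow_succ]; ring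
    rw [h2]
    exact h1.neg_left

lemma O_help {u : ℝ → ℂ} {K c : ℝ} (m : ℕ)
    (hu : ∀ᶠ t in 𝓝[>] (0:ℝ), ‖u t‖ ≤ K * (t ^ c * (-Real.log t) ^ m)) {ε : ℝ} (hε : 0 < ε) :
    u =O[𝓝[>] (0:ℝ)] fun t => t ^ (c - ε) := by
  obtain ⟨C, hC⟩ := (logm_O m ε hε).bound
  rw [isBigO_iff]
  refine ⟨|K| * C, ?_⟩
  filter_upwards [hu, hC, self_mem_nhdsWithin] with t h1 h2 ht
  have ht0 : (0:ℝ) < t := ht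
  have hL : |(-Real.log t) ^ m| ≤ C * t ^ (-ε) := by
    have := h2
    rwa [Real.norm_eq_abs, Real.norm_eq_abs, _root_.abs_of_nonneg (Real.rpow_nonneg ht0.le _)] at this
  have hC0 : 0 ≤ C * t ^ (-ε) := le_trans (abs_nonneg _) hL
  calc ‖u t‖ ≤ K * (t ^ c * (-Real.log t) ^ m) := h1
    _ ≤ |K| * (t ^ c * |(-Real.log t) ^ m|) := by
        calc K * (t ^ c * (-Real.log t) ^ m) ≤ |K * (t ^ c * (-Real.log t) ^ m)| := le_abs_self _
          _ = |K| * (t ^ c * |(-Real.log t) ^ m|) := by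
              rw [abs_mul, abs_mul, _root_.abs_of_nonneg (Real.rpow_nonneg ht0.le _)]
    _ ≤ |K| * (t ^ c * (C * t ^ (-ε))) := by gcongr
    _ = (|K| * C) * (t ^ c * t ^ (-ε)) := by ring
    _ = (|K| * C) * t ^ (c - ε) := by rw [← Real.rpow_add ht0]; ring_nf
    _ = (|K| * C) * ‖t ^ (c - ε)‖ := by
        rw [Real.norm_eq_abs, _root_.abs_of_nonneg (Real.rpow_nonneg ht0.le _)]

lemma O_help' {u : ℝ → ℂ} {K c : ℝ} (m : ℕ)
    (hu : ∀ᶠ t in 𝓝[>] (0:ℝ), ‖u t‖ ≤ K * (t ^ c * (-Real.log t) ^ m)) {ε : ℝ} (hε : 0 < ε) :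
    u =O[𝓝[>] (0:ℝ)] fun t => t ^ (-(ε - c)) := by
  simpa only [neg_sub] using O_help m hu hε

lemma mellin_logpow (m : ℕ) : ∀ s : ℂ, 0 < s.re →
    mellin (Set.indicator (Set.Ioc 0 1) (fun t : ℝ => (((-Real.log t) ^ m : ℝ) : ℂ))) s
      = (m.factorial : ℂ) / s ^ (m + 1) := by
  induction m with
  | zero =>
    intro s hs
    have h := (hasMellin_one_Ioc hs).2
    have he : (Set.indicator (Set.Ioc 0 1) (fun t : ℝ => (((-Real.log t) ^ 0 : ℝ) : ℂ)))
        = Set.indicator (Set.Ioc (0:ℝ) 1) (fun _ => (1:ℂ)) := by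
      funext t; simp
    rw [he, h]; simp
  | succ m ih =>
    intro s hs
    set gm := Set.indicator (Set.Ioc (0:ℝ) 1) (fun t : ℝ => (((-Real.log t) ^ m : ℝ) : ℂ)) with hgm
    have hfc : LocallyIntegrableOn gm (Ioi 0) := by
      rw [locallyIntegrableOn_iff isOpen_Ioi.isLocallyClosed]
      intro k hk hkc
      have hcont : ContinuousOn (fun t : ℝ => (((-Real.log t) ^ m : ℝ) : ℂ)) k := by
        refine Continuous.comp_continuousOn Complex.continuous_ofReal ?_
        refine ContinuousOn.pow ?_ m
        exact (Real.continuousOn_log.mono (by intro x hx; exact ne_of_gt (hk hx))).neg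
      exact (hcont.integrableOn_compact hkc).indicator measurableSet_Ioc
    have htop : gm =O[atTop] fun t : ℝ => t ^ (-(s.re + 1)) := by
      have hev : gm =ᶠ[atTop] 0 := by
        filter_upwards [eventually_gt_atTop (1:ℝ)] with t ht
        simp [hgm, Set.indicator_of_notMem, not_and_or, ht.not_ge]
      exact hev.trans_isBigO (isBigO_zero _ _)
    have hbot : gm =O[𝓝[>] (0:ℝ)] fun t : ℝ => t ^ (-(s.re / 2)) := by
      have h0 : gm =O[𝓝[>] (0:ℝ)] fun t : ℝ => (-Real.log t) ^ m := by
        rw [isBigO_iff]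
        refine ⟨1, ?_⟩
        filter_upwards [Ioo_mem_nhdsGT (zero_lt_one : (0:ℝ) < 1)] with t ht
        rw [one_mul]
        by_cases h : t ∈ Set.Ioc (0:ℝ) 1
        · rw [hgm, Set.indicator_of_mem h, Complex.norm_real]
        · simp [hgm, Set.indicator_of_notMem h, norm_nonneg]
      exact h0.trans ((logm_O m (s.re/2) (by linarith)).mono le_rfl)
    obtain ⟨hconv, hder⟩ := mellin_hasDerivAt_of_isBigO_rpow hfc htop
      (by linarith : s.re < s.re + 1) hbot (by linarith : s.re/2 < s.re)
    set gm1 := Set.indicator (Set.Ioc (0:ℝ) 1)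
      (fun t : ℝ => (((-Real.log t) ^ (m+1) : ℝ) : ℂ)) with hgm1
    have hfun : (fun t : ℝ => Real.log t • gm t) = fun t => -(gm1 t) := by
      funext t
      by_cases h : t ∈ Set.Ioc (0:ℝ) 1
      · simp only [hgm, hgm1, Set.indicator_of_mem h, Complex.real_smul]
        push_cast
        ring
      · simp [hgm, hgm1, Set.indicator_of_notMem h]
    have hmneg : mellin (fun t : ℝ => Real.log t • gm t) s = -(mellin gm1 s) := by
      rw [hfun]
      simp only [mellin, smul_neg, integral_neg]
    have hopen : {z : ℂ | 0 < z.re} ∈ 𝓝 s :=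
      (isOpen_lt continuous_const Complex.continuous_re).mem_nhds hs
    have heq : (fun z : ℂ => (m.factorial : ℂ) / z ^ (m+1)) =ᶠ[𝓝 s] mellin gm := by
      filter_upwards [hopen] with z hz
      exact (ih z hz).symm
    have hder2 : HasDerivAt (fun z : ℂ => (m.factorial : ℂ) / z ^ (m+1))
        (mellin (fun t : ℝ => Real.log t • gm t) s) s :=
      hder.congr_of_eventuallyEq heq
    have hs0 : s ≠ 0 := by intro h; rw [h] at hs; simp at hs
    have hne : s ^ (m+1) ≠ 0 := pow_ne_zero _ hs0
    have hpow : HasDerivAt (fun z : ℂ => z ^ (m+1)) ((m+1 : ℕ) * s ^ (m + 1 - 1)) s :=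
      hasDerivAt_pow (m+1) s
    have hder3 : HasDerivAt (fun z : ℂ => (m.factorial : ℂ) / z ^ (m+1))
        ((0 * s ^ (m+1) - (m.factorial : ℂ) * ((m+1 : ℕ) * s ^ (m + 1 - 1))) / (s ^ (m+1)) ^ 2)
        s := (hasDerivAt_const s ((m.factorial : ℂ))).div hpow hne
    have huniq := hder2.unique hder3
    rw [hmneg] at huniq
    have hval : mellin gm1 s
        = ((m.factorial : ℂ) * ((m+1 : ℕ) * s ^ (m + 1 - 1))) / (s ^ (m+1)) ^ 2 := by
      have := congrArg Neg.neg huniq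
      rw [neg_neg] at this
      rw [this]
      ring
    rw [hval, div_eq_div_iff (pow_ne_zero 2 hne) (pow_ne_zero _ hs0)]
    simp only [Nat.add_sub_cancel]
    push_cast [Nat.factorial_succ]
    ring


lemma indicator_mellin_integrand (S : Set ℝ) (u : ℝ → ℂ) (z : ℂ) :
    (fun t : ℝ => (t:ℂ) ^ (z - 1) • Set.indicator S u t)
      = Set.indicator S (fun t : ℝ => (t:ℂ) ^ (z - 1) * u t) := by
  funext t
  by_cases h : t ∈ S <;>
    simp [Set.indicator_of_mem, Set.indicator_of_notMem, h, smul_eq_mul]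

lemma mellin_indicator_eq {S : Set ℝ} (hS : MeasurableSet S) (hsub : S ⊆ Ioi 0) (u : ℝ → ℂ)
    (z : ℂ) : mellin (Set.indicator S u) z = ∫ t in S, (t:ℂ) ^ (z - 1) * u t := by
  rw [mellin]
  simp_rw [indicator_mellin_integrand S u z]
  rw [setIntegral_indicator hS, Set.inter_eq_self_of_subset_right hsub]

lemma mellinConvergent_indicator_iff {S : Set ℝ} (hS : MeasurableSet S) (hsub : S ⊆ Ioi 0)
    (u : ℝ → ℂ) (z : ℂ) :
    MellinConvergent (Set.indicator S u) z
      ↔ IntegrableOn (fun t : ℝ => (t:ℂ) ^ (z - 1) * u t) S := by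
  rw [MellinConvergent]
  simp_rw [indicator_mellin_integrand S u z]
  rw [IntegrableOn, integrable_indicator_iff hS, IntegrableOn, IntegrableOn,
    Measure.restrict_restrict hS, Set.inter_eq_self_of_subset_left hsub]


/-- Minkowski measurable RFDs (with a power-logarithmic gauge): if
`|A_t ∩ Ω| = t^{N-D} (log(1/t))^m (M + O(t^α))` as `t → 0⁺`, then for every `δ > 0` the
relative tube zeta function `∫_0^δ t^{s-N-1}|A_t ∩ Ω| dt` equals
`m!·M·(s-D)^{-(m+1)} + H(s)` for `Re s > D`, where `H` is holomorphic on
`{Re s > D - α}`; hence the tube zeta function extends meromorphically to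
`{Re s > D - α}` with a single pole there, at `s = D`, of order `m + 1`. -/
theorem stmt12 (N : ℕ) (hN : 1 ≤ N) (A Ω : Set (EuclideanSpace ℝ (Fin N)))
    (hA : A.Nonempty) (hΩo : IsOpen Ω) (hΩv : volume Ω < ⊤)
    (hΩδ : ∃ δ > 0, Ω ⊆ Metric.thickening δ A)
    (D : ℝ) (hDN : D ≤ (N : ℝ)) (M : ℝ) (hM : 0 < M)
    (α : ℝ) (hα : 0 < α) (m : ℕ)
    (hasymp : ∃ C > 0, ∃ t₀ ∈ Set.Ioo (0 : ℝ) 1, ∀ t ∈ Set.Ioo (0 : ℝ) t₀,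
      |(volume (Metric.thickening t A ∩ Ω)).toReal
          - M * t ^ ((N : ℝ) - D) * (Real.log (1 / t)) ^ m|
        ≤ C * t ^ ((N : ℝ) - D + α) * (Real.log (1 / t)) ^ m) :
    ∀ δ : ℝ, 0 < δ → ∃ H : ℂ → ℂ,
      DifferentiableOn ℂ H {z : ℂ | D - α < z.re} ∧
      ∀ s : ℂ, D < s.re →
        MeasureTheory.IntegrableOn
            (fun t : ℝ => (t : ℂ) ^ (s - (N : ℂ) - 1) *
              ((volume (Metric.thickening t A ∩ Ω)).toReal : ℂ)) (Set.Ioo 0 δ) volume ∧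
        ∫ t in Set.Ioo (0 : ℝ) δ, (t : ℂ) ^ (s - (N : ℂ) - 1) *
              ((volume (Metric.thickening t A ∩ Ω)).toReal : ℂ)
          = (m.factorial : ℂ) * (M : ℂ) * ((s - (D : ℂ)) ^ (m + 1))⁻¹ + H s := by
  obtain ⟨C, hC, t₀, ht₀, hbound⟩ := hasymp
  intro δ hδ
  set f : ℝ → ℝ := fun t => (volume (Metric.thickening t A ∩ Ω)).toReal with hfdef
  have hfmono : Monotone f := by
    intro x y hxy
    exact ENNReal.toReal_mono (ne_top_of_le_ne_top hΩv.ne (measure_mono inter_subset_right))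
      (measure_mono (inter_subset_inter_left _ (Metric.thickening_mono hxy _)))
  have hfmeas : Measurable f := hfmono.measurable
  set V : ℝ := (volume Ω).toReal with hV
  have hf0 : ∀ t, 0 ≤ f t := fun t => ENNReal.toReal_nonneg
  have hfV : ∀ t, f t ≤ V := fun t =>
    ENNReal.toReal_mono hΩv.ne (measure_mono inter_subset_right)
  have hV0 : 0 ≤ V := ENNReal.toReal_nonneg
  set b : ℝ := min t₀ δ with hbdef
  have hb0 : 0 < b := lt_min ht₀.1 hδ
  have hb1 : b < 1 := lt_of_le_of_lt (min_le_left _ _) ht₀.2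
  have hbt₀ : b ≤ t₀ := min_le_left _ _
  have hbδ : b ≤ δ := min_le_right _ _
  have hbound' : ∀ t ∈ Set.Ioo (0:ℝ) b,
      |f t - M * (t ^ ((N:ℝ) - D) * (-Real.log t) ^ m)|
        ≤ C * (t ^ ((N:ℝ) - D + α) * (-Real.log t) ^ m) := by
    intro t ht
    have h := hbound t ⟨ht.1, lt_of_lt_of_le ht.2 hbt₀⟩
    rw [one_div, Real.log_inv] at h
    simpa only [← mul_assoc] using h
  -- positivity of log factors on (0,1)
  have hLpos : ∀ t : ℝ, 0 < t → t < 1 → 0 ≤ (-Real.log t) ^ m := by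
    intro t ht0 ht1
    have : Real.log t < 0 := Real.log_neg ht0 ht1
    exact pow_nonneg (by linarith) m
  -- complex functions
  set ψ : ℝ → ℂ := fun t => (((-Real.log t) ^ m : ℝ) : ℂ) with hψdef
  set g : ℝ → ℂ := fun t => ((t ^ ((N:ℝ) - D) * (-Real.log t) ^ m : ℝ) : ℂ) with hgdef
  set φ : ℝ → ℂ := Set.indicator (Set.Ioo 0 δ) (fun t => (f t : ℂ)) with hφdef
  set gb : ℝ → ℂ := Set.indicator (Set.Ioo 0 b) g with hgbdef
  set gB : ℝ → ℂ := Set.indicator (Set.Ico b 1) ψ with hgBdef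
  set ρ : ℝ → ℂ := fun t => φ t - (M:ℂ) * gb t with hρdef
  -- continuity
  have hψcont : ContinuousOn ψ (Ioi 0) := by
    refine Continuous.comp_continuousOn Complex.continuous_ofReal ?_
    exact ((Real.continuousOn_log.mono (fun x hx => ne_of_gt hx)).neg.pow m)
  have hgcont : ContinuousOn g (Ioi 0) := by
    refine Continuous.comp_continuousOn Complex.continuous_ofReal ?_
    refine ContinuousOn.mul ?_ ((Real.continuousOn_log.mono (fun x hx => ne_of_gt hx)).neg.pow m)
    exact continuousOn_of_forall_continuousAt fun t ht =>
      Real.continuousAt_rpow_const t _ (Or.inl (ne_of_gt ht))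
  -- integrability on compacts & local integrability
  have hφk : ∀ k : Set ℝ, IsCompact k → IntegrableOn φ k := by
    intro k hkc
    refine Integrable.mono' (g := fun _ => V)
      (integrableOn_const hkc.measure_lt_top.ne) ?_ ?_
    · exact ((Complex.measurable_ofReal.comp hfmeas).indicator
        measurableSet_Ioo).aestronglyMeasurable
    · refine Filter.Eventually.of_forall fun t => ?_
      by_cases h : t ∈ Set.Ioo (0:ℝ) δ
      · simp only [hφdef, Set.indicator_of_mem h, Complex.norm_real, Real.norm_eq_abs,
          _root_.abs_of_nonneg (hf0 t)]
        exact hfV t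
      · simp [hφdef, Set.indicator_of_notMem h, hV0]
  have hgbk : ∀ k : Set ℝ, k ⊆ Ioi (0:ℝ) → IsCompact k → IntegrableOn gb k := by
    intro k hk hkc
    exact ((hgcont.mono hk).integrableOn_compact hkc).indicator measurableSet_Ioo
  have hgBk : ∀ k : Set ℝ, k ⊆ Ioi (0:ℝ) → IsCompact k → IntegrableOn gB k := by
    intro k hk hkc
    exact ((hψcont.mono hk).integrableOn_compact hkc).indicator measurableSet_Ico
  have hφloc : LocallyIntegrableOn φ (Ioi 0) := by
    rw [locallyIntegrableOn_iff isOpen_Ioi.isLocallyClosed]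
    exact fun k _ hkc => hφk k hkc
  have hgbloc : LocallyIntegrableOn gb (Ioi 0) := by
    rw [locallyIntegrableOn_iff isOpen_Ioi.isLocallyClosed]
    exact fun k hk hkc => hgbk k hk hkc
  have hgBloc : LocallyIntegrableOn gB (Ioi 0) := by
    rw [locallyIntegrableOn_iff isOpen_Ioi.isLocallyClosed]
    exact fun k hk hkc => hgBk k hk hkc
  have hρloc : LocallyIntegrableOn ρ (Ioi 0) := by
    rw [locallyIntegrableOn_iff isOpen_Ioi.isLocallyClosed]
    exact fun k hk hkc => (hφk k hkc).sub ((hgbk k hk hkc).const_mul (M:ℂ))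
  -- vanishing at infinity
  have hφtop0 : φ =ᶠ[atTop] 0 := by
    filter_upwards [eventually_ge_atTop δ] with t ht
    simp [hφdef, Set.indicator_of_notMem, ht.not_gt]
  have hgbtop0 : gb =ᶠ[atTop] 0 := by
    filter_upwards [eventually_ge_atTop b] with t ht
    simp [hgbdef, Set.indicator_of_notMem, ht.not_gt]
  have hgBtop0 : gB =ᶠ[atTop] 0 := by
    filter_upwards [eventually_ge_atTop 1] with t ht
    simp [hgBdef, Set.indicator_of_notMem, ht.not_gt]
  have hρtop0 : ρ =ᶠ[atTop] 0 := by
    filter_upwards [hφtop0, hgbtop0] with t h1 h2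
    simp [hρdef, h1, h2]
  have htopO : ∀ (u : ℝ → ℂ), u =ᶠ[atTop] 0 → ∀ a : ℝ,
      u =O[atTop] fun t : ℝ => t ^ (-a) := fun u hu a =>
    hu.trans_isBigO (isBigO_zero _ _)
  -- bounds at 0
  have hφbound : ∀ᶠ t in 𝓝[>] (0:ℝ), ‖φ t‖
      ≤ (M + C) * (t ^ ((N:ℝ) - D) * (-Real.log t) ^ m) := by
    filter_upwards [Ioo_mem_nhdsGT hb0] with t ht
    have htδ : t ∈ Set.Ioo (0:ℝ) δ := ⟨ht.1, lt_of_lt_of_le ht.2 hbδ⟩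
    have ht1 : t < 1 := lt_trans ht.2 hb1
    have hL := hLpos t ht.1 ht1
    have h := hbound' t ht
    have h2 : f t ≤ M * (t ^ ((N:ℝ) - D) * (-Real.log t) ^ m)
        + C * (t ^ ((N:ℝ) - D + α) * (-Real.log t) ^ m) := by
      have := abs_le.1 h
      linarith [this.2]
    have h3 : t ^ ((N:ℝ) - D + α) ≤ t ^ ((N:ℝ) - D) :=
      Real.rpow_le_rpow_of_exponent_ge ht.1 ht1.le (by linarith)
    have h4 : C * (t ^ ((N:ℝ) - D + α) * (-Real.log t) ^ m)
        ≤ C * (t ^ ((N:ℝ) - D) * (-Real.log t) ^ m) := by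
      apply mul_le_mul_of_nonneg_left _ hC.le
      exact mul_le_mul_of_nonneg_right h3 hL
    simp only [hφdef, Set.indicator_of_mem htδ, Complex.norm_real, Real.norm_eq_abs,
      _root_.abs_of_nonneg (hf0 t)]
    calc f t ≤ _ + _ := h2
      _ ≤ M * (t ^ ((N:ℝ) - D) * (-Real.log t) ^ m)
          + C * (t ^ ((N:ℝ) - D) * (-Real.log t) ^ m) := by linarith
      _ = (M + C) * (t ^ ((N:ℝ) - D) * (-Real.log t) ^ m) := by ring
  have hgbbound : ∀ᶠ t in 𝓝[>] (0:ℝ), ‖gb t‖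
      ≤ 1 * (t ^ ((N:ℝ) - D) * (-Real.log t) ^ m) := by
    filter_upwards [Ioo_mem_nhdsGT hb0] with t ht
    have ht1 : t < 1 := lt_trans ht.2 hb1
    have hL := hLpos t ht.1 ht1
    simp only [hgbdef, Set.indicator_of_mem ht, hgdef, Complex.norm_real, Real.norm_eq_abs,
      one_mul]
    rw [_root_.abs_of_nonneg (mul_nonneg (Real.rpow_nonneg ht.1.le _) hL)]
  have hρbound : ∀ᶠ t in 𝓝[>] (0:ℝ), ‖ρ t‖
      ≤ C * (t ^ ((N:ℝ) - D + α) * (-Real.log t) ^ m) := by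
    filter_upwards [Ioo_mem_nhdsGT hb0] with t ht
    have htδ : t ∈ Set.Ioo (0:ℝ) δ := ⟨ht.1, lt_of_lt_of_le ht.2 hbδ⟩
    have h := hbound' t ht
    have : ρ t = ((f t - M * (t ^ ((N:ℝ) - D) * (-Real.log t) ^ m) : ℝ) : ℂ) := by
      simp only [hρdef, hφdef, hgbdef, hgdef, Set.indicator_of_mem htδ,
        Set.indicator_of_mem ht]
      push_cast
      ring
    rw [this, Complex.norm_real, Real.norm_eq_abs]
    exact h
  have hgBbot0 : gB =ᶠ[𝓝[>] (0:ℝ)] 0 := by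
    filter_upwards [Ioo_mem_nhdsGT hb0] with t ht
    simp [hgBdef, Set.indicator_of_notMem, ht.2.not_ge]
  -- define H
  set H : ℂ → ℂ := fun s => mellin ρ (s - (N:ℂ)) - (M:ℂ) * mellin gB (s - (D:ℂ)) with hHdef
  refine ⟨H, ?_, ?_⟩
  · -- differentiability
    intro s hs
    simp only [Set.mem_setOf_eq] at hs
    have h1 : DifferentiableAt ℂ (mellin ρ) (s - (N:ℂ)) := by
      set ε : ℝ := (s.re - (D - α)) / 2 with hε
      have hε0 : 0 < ε := by simp only [hε]; linarith
      refine mellin_differentiableAt_of_isBigO_rpow hρloc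
        (htopO ρ hρtop0 ((s - (N:ℂ)).re + 1)) ?_ (O_help' m hρbound hε0) ?_
      · exact lt_add_one _
      · simp only [Complex.sub_re, Complex.natCast_re]
        simp only [hε]
        linarith
    have h2 : DifferentiableAt ℂ (mellin gB) (s - (D:ℂ)) := by
      refine mellin_differentiableAt_of_isBigO_rpow hgBloc
        (htopO gB hgBtop0 ((s - (D:ℂ)).re + 1)) ?_
        (hgBbot0.trans_isBigO (isBigO_zero (fun t : ℝ => t ^ (-((s - (D:ℂ)).re - 1))) _)) ?_
      · exact lt_add_one _
      · linarith
    have h1' : DifferentiableAt ℂ (fun z : ℂ => mellin ρ (z - (N:ℂ))) s := by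
      have := DifferentiableAt.comp s h1
        ((differentiableAt_id.sub (differentiableAt_const ((N:ℂ)))))
      exact this
    have h2' : DifferentiableAt ℂ (fun z : ℂ => mellin gB (z - (D:ℂ))) s := by
      have := DifferentiableAt.comp s h2
        ((differentiableAt_id.sub (differentiableAt_const ((D:ℂ)))))
      exact this
    exact (h1'.sub (h2'.const_mul (M:ℂ))).differentiableWithinAt
  · -- main identity for Re s > D
    intro s hs
    have hsD : 0 < (s - (D:ℂ)).re := by simp [Complex.sub_re, Complex.ofReal_re]; linarith
    set ε : ℝ := (s.re - D) / 2 with hε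
    have hε0 : 0 < ε := by simp only [hε]; linarith
    have hconvφ : MellinConvergent φ (s - (N:ℂ)) := by
      refine mellinConvergent_of_isBigO_rpow hφloc
        (htopO φ hφtop0 ((s - (N:ℂ)).re + 1)) ?_ (O_help' m hφbound hε0) ?_
      · exact lt_add_one _
      · simp only [Complex.sub_re, Complex.natCast_re]
        simp only [hε]
        linarith
    have hconvgb : MellinConvergent gb (s - (N:ℂ)) := by
      refine mellinConvergent_of_isBigO_rpow hgbloc
        (htopO gb hgbtop0 ((s - (N:ℂ)).re + 1)) ?_ (O_help' m hgbbound hε0) ?_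
      · exact lt_add_one _
      · simp only [Complex.sub_re, Complex.natCast_re]
        simp only [hε]
        linarith
    have hconvρ : MellinConvergent ρ (s - (N:ℂ)) := by
      rw [MellinConvergent] at hconvφ hconvgb ⊢
      have heq : (fun t : ℝ => (t:ℂ) ^ (s - (N:ℂ) - 1) • ρ t)
          = fun t : ℝ => (t:ℂ) ^ (s - (N:ℂ) - 1) • φ t
            - (M:ℂ) * ((t:ℂ) ^ (s - (N:ℂ) - 1) • gb t) := by
        funext t
        simp only [hρdef, smul_eq_mul]
        ring
      rw [heq]
      exact hconvφ.sub (hconvgb.const_mul (M:ℂ))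
    have hIooδsub : Set.Ioo (0:ℝ) δ ⊆ Ioi 0 := Set.Ioo_subset_Ioi_self
    have hIoobsub : Set.Ioo (0:ℝ) b ⊆ Ioi 0 := Set.Ioo_subset_Ioi_self
    have hIcosub : Set.Ico b (1:ℝ) ⊆ Ioi 0 := fun t ht => lt_of_lt_of_le hb0 ht.1
    have hIocsub : Set.Ioc (0:ℝ) 1 ⊆ Ioi 0 := Set.Ioc_subset_Ioi_self
    have hconvφ' := hconvφ
    rw [hφdef] at hconvφ'
    constructor
    · exact (mellinConvergent_indicator_iff measurableSet_Ioo hIooδsub _ _).1 hconvφ'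
    have hmelφ : (∫ t in Set.Ioo (0:ℝ) δ, (t:ℂ) ^ (s - (N:ℂ) - 1) * ((f t : ℝ) : ℂ))
        = mellin φ (s - (N:ℂ)) := by
      rw [hφdef]
      exact (mellin_indicator_eq measurableSet_Ioo hIooδsub _ _).symm
    have hsplit : mellin φ (s - (N:ℂ))
        = (M:ℂ) * mellin gb (s - (N:ℂ)) + mellin ρ (s - (N:ℂ)) := by
      have hadd := hasMellin_add (hconvgb.const_smul (M:ℂ)) hconvρ
      have hfeq : (fun t : ℝ => (M:ℂ) • gb t + ρ t) = φ := by
        funext t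
        simp only [hρdef, smul_eq_mul]
        ring
      rw [hfeq] at hadd
      rw [hadd.2, mellin_const_smul, smul_eq_mul]
    have hcongr : ∀ t ∈ Set.Ioo (0:ℝ) b,
        (t:ℂ) ^ (s - (N:ℂ) - 1) * g t = (t:ℂ) ^ (s - (D:ℂ) - 1) * ψ t := by
      intro t ht
      have ht0 : (0:ℝ) < t := ht.1
      have htne : (t:ℂ) ≠ 0 := Complex.ofReal_ne_zero.2 (ne_of_gt ht0)
      simp only [hgdef, hψdef]
      rw [Complex.ofReal_mul, Complex.ofReal_cpow ht0.le,
        show ((((N:ℝ) - D : ℝ)) : ℂ) = (N:ℂ) - (D:ℂ) by push_cast; ring,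
        ← mul_assoc, ← Complex.cpow_add _ _ htne]
      congr 2
      ring
    have hgbJ : mellin gb (s - (N:ℂ))
        = ∫ t in Set.Ioo (0:ℝ) b, (t:ℂ) ^ (s - (D:ℂ) - 1) * ψ t := by
      rw [hgbdef, mellin_indicator_eq measurableSet_Ioo hIoobsub]
      exact setIntegral_congr_fun measurableSet_Ioo hcongr
    have hgBJ : mellin gB (s - (D:ℂ))
        = ∫ t in Set.Ico b (1:ℝ), (t:ℂ) ^ (s - (D:ℂ) - 1) * ψ t := by
      rw [hgBdef]
      exact mellin_indicator_eq measurableSet_Ico hIcosub _ _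
    have hg1J : (∫ t in Set.Ioc (0:ℝ) 1, (t:ℂ) ^ (s - (D:ℂ) - 1) * ψ t)
        = (m.factorial : ℂ) / (s - (D:ℂ)) ^ (m + 1) := by
      rw [← mellin_indicator_eq measurableSet_Ioc hIocsub, hψdef]
      exact mellin_logpow m (s - (D:ℂ)) hsD
    have hintb : IntegrableOn (fun t : ℝ => (t:ℂ) ^ (s - (D:ℂ) - 1) * ψ t) (Set.Ioo 0 b) := by
      have hconvgb' := hconvgb
      rw [hgbdef] at hconvgb'
      have h := (mellinConvergent_indicator_iff measurableSet_Ioo hIoobsub _ _).1 hconvgb'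
      exact h.congr_fun hcongr measurableSet_Ioo
    have hintB : IntegrableOn (fun t : ℝ => (t:ℂ) ^ (s - (D:ℂ) - 1) * ψ t) (Set.Ico b 1) := by
      refine IntegrableOn.mono_set ?_ Set.Ico_subset_Icc_self
      refine ContinuousOn.integrableOn_compact isCompact_Icc ?_
      have hsub : Set.Icc b (1:ℝ) ⊆ Ioi 0 := fun t ht => lt_of_lt_of_le hb0 ht.1
      refine ContinuousOn.mul ?_ (hψcont.mono hsub)
      exact continuousOn_of_forall_continuousAt fun t ht =>
        Complex.continuousAt_ofReal_cpow_const t _ (Or.inr (ne_of_gt (hsub ht)))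
    have hdisj : Disjoint (Set.Ioo (0:ℝ) b) (Set.Ico b 1) :=
      Set.disjoint_left.2 fun t h1 h2 => absurd h2.1 h1.2.not_ge
    have hunion : (∫ t in Set.Ioc (0:ℝ) 1, (t:ℂ) ^ (s - (D:ℂ) - 1) * ψ t)
        = (∫ t in Set.Ioo (0:ℝ) b, (t:ℂ) ^ (s - (D:ℂ) - 1) * ψ t)
          + ∫ t in Set.Ico b (1:ℝ), (t:ℂ) ^ (s - (D:ℂ) - 1) * ψ t := by
      rw [integral_Ioc_eq_integral_Ioo, ← Set.Ioo_union_Ico_eq_Ioo hb0 hb1.le]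
      exact setIntegral_union hdisj measurableSet_Ico hintb hintB
    have hJb : (∫ t in Set.Ioo (0:ℝ) b, (t:ℂ) ^ (s - (D:ℂ) - 1) * ψ t)
        = (m.factorial : ℂ) / (s - (D:ℂ)) ^ (m + 1)
          - ∫ t in Set.Ico b (1:ℝ), (t:ℂ) ^ (s - (D:ℂ) - 1) * ψ t := by
      rw [← hg1J, hunion]
      ring
    rw [hmelφ, hsplit, hgbJ, hJb, hHdef]
    simp only [hgBJ]
    rw [div_eq_mul_inv]
    ring
end

section
/- Let N ≥ 1 and let (A,Ω) be a relative fractal drum in ℝ^N. Identify ℝ^{N+1} with ℝ^N × ℝ carrying the Euclidean norm, so that the distance from (x,y) to A×{0} equals √(d(x,A)² + y²). Then for every δ ∈ (0,1): |(A×{0})_δ ∩ (Ω×(−1,1))|_{N+1} = 2·∫_0^δ |A_{√(δ²−u²)} ∩ Ω|_N du, where |·|_N and |·|_{N+1} denote N- and (N+1)-dimensional Lebesgue measure, respectively. -/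
open MeasureTheory Metric Filter Set
open scoped ENNReal Topology

/-- For an RFD `(A, Ω)` in `ℝ^N`, embedding into `ℝ^{N+1} = ℝ^N × ℝ` with the Euclidean
norm (so that the distance from `(x, y)` to `A × {0}` equals `√(d(x,A)² + y²)`), for every
`δ ∈ (0,1)` one has
`|(A×{0})_δ ∩ (Ω×(-1,1))|_{N+1} = 2 ∫_0^δ |A_{√(δ²-u²)} ∩ Ω|_N du`. -/
theorem stmt14 (N : ℕ) (hN : 1 ≤ N) (A Ω : Set (EuclideanSpace ℝ (Fin N)))
    (hA : A.Nonempty) (hΩo : IsOpen Ω) (hΩv : volume Ω < ⊤)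
    (hΩδ : ∃ δ' > 0, Ω ⊆ Metric.thickening δ' A)
    (δ : ℝ) (hδ : δ ∈ Set.Ioo (0 : ℝ) 1) :
    volume
        ({p : EuclideanSpace ℝ (Fin N) × ℝ |
            Real.sqrt (Metric.infDist p.1 A ^ 2 + p.2 ^ 2) < δ} ∩
          Ω ×ˢ Set.Ioo (-1 : ℝ) 1)
      = 2 * ∫⁻ u in Set.Ioo (0 : ℝ) δ,
          volume (Metric.thickening (Real.sqrt (δ ^ 2 - u ^ 2)) A ∩ Ω) := by
  obtain ⟨hδ0, hδ1⟩ := hδ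
  set f : ℝ → ℝ≥0∞ := fun u => volume (Metric.thickening (Real.sqrt (δ ^ 2 - u ^ 2)) A ∩ Ω)
    with hf
  set s : Set (EuclideanSpace ℝ (Fin N) × ℝ) :=
    {p : EuclideanSpace ℝ (Fin N) × ℝ |
        Real.sqrt (Metric.infDist p.1 A ^ 2 + p.2 ^ 2) < δ} ∩ Ω ×ˢ Set.Ioo (-1 : ℝ) 1 with hs
  have hsopen : IsOpen s := by
    apply IsOpen.inter
    · have hc : Continuous fun p : EuclideanSpace ℝ (Fin N) × ℝ =>
        Real.sqrt (Metric.infDist p.1 A ^ 2 + p.2 ^ 2) :=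
        Real.continuous_sqrt.comp
          ((((Metric.continuous_infDist_pt A).comp continuous_fst).pow 2).add
            (continuous_snd.pow 2))
      exact isOpen_lt hc continuous_const
    · exact hΩo.prod isOpen_Ioo
  have hsm : MeasurableSet s := hsopen.measurableSet
  have hfiber : ∀ y : ℝ, volume ((fun x => (x, y)) ⁻¹' s) = (Set.Ioo (-δ) δ).indicator f y := by
    intro y
    by_cases hy : |y| < δ
    · have hy' : y ∈ Set.Ioo (-δ) δ := abs_lt.mp hy
      rw [Set.indicator_of_mem hy']
      congr 1
      ext x
      simp only [hs, Set.mem_preimage, Set.mem_inter_iff, Set.mem_setOf_eq, Set.mem_prod,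
        Set.mem_Ioo]
      constructor
      · rintro ⟨h1, h2, _⟩
        refine ⟨?_, h2⟩
        rw [Metric.mem_thickening_iff_infDist_lt hA]
        rw [Real.sqrt_lt' hδ0] at h1
        rw [Real.lt_sqrt Metric.infDist_nonneg]
        linarith
      · rintro ⟨h1, h2⟩
        rw [Metric.mem_thickening_iff_infDist_lt hA,
          Real.lt_sqrt Metric.infDist_nonneg] at h1
        refine ⟨?_, h2, ?_, ?_⟩
        · rw [Real.sqrt_lt' hδ0]; linarith
        · linarith [(abs_lt.mp hy).1]
        · linarith [(abs_lt.mp hy).2]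
    · have hy' : y ∉ Set.Ioo (-δ) δ := fun h => hy (abs_lt.mpr ⟨h.1, h.2⟩)
      rw [Set.indicator_of_notMem hy']
      have hemp : (fun x : EuclideanSpace ℝ (Fin N) => (x, y)) ⁻¹' s = ∅ := by
        ext x
        simp only [hs, Set.mem_preimage, Set.mem_inter_iff, Set.mem_setOf_eq, Set.mem_prod,
          Set.mem_Ioo, Set.mem_empty_iff_false, iff_false, not_and]
        intro h1
        exfalso
        apply hy
        calc |y| = Real.sqrt (y ^ 2) := (Real.sqrt_sq_eq_abs y).symm
          _ ≤ Real.sqrt (Metric.infDist x A ^ 2 + y ^ 2) := by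
              exact Real.sqrt_le_sqrt (by nlinarith [sq_nonneg (Metric.infDist x A)])
          _ < δ := h1
      rw [hemp, measure_empty]
  rw [Measure.volume_eq_prod, Measure.prod_apply_symm hsm]
  simp_rw [hfiber]
  rw [lintegral_indicator measurableSet_Ioo]
  have hsplit : Set.Ioo (-δ) δ = Set.Ioo (-δ) 0 ∪ Set.Ico 0 δ :=
    (Set.Ioo_union_Ico_eq_Ioo (by linarith) hδ0.le).symm
  rw [hsplit, lintegral_union measurableSet_Ico (by
    rw [Set.disjoint_left]; rintro x ⟨_, h2⟩ ⟨h3, _⟩; linarith)]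
  have hIco : ∫⁻ y in Set.Ico 0 δ, f y = ∫⁻ y in Set.Ioo 0 δ, f y :=
    (setLIntegral_congr Ioo_ae_eq_Ico).symm
  have hneg : ∫⁻ y in Set.Ioo (-δ) 0, f y = ∫⁻ y in Set.Ioo 0 δ, f y := by
    have h := (Measure.measurePreserving_neg (volume : Measure ℝ)).setLIntegral_comp_preimage_emb
      measurableEmbedding_neg f (Set.Ioo (-δ) 0)
    rw [← h]
    have hpre : (Neg.neg ⁻¹' Set.Ioo (-δ) 0 : Set ℝ) = Set.Ioo 0 δ := by
      ext x; simp only [Set.mem_preimage, Set.mem_Ioo]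
      constructor <;> rintro ⟨a, b⟩ <;> exact ⟨by linarith, by linarith⟩
    rw [hpre]
    apply setLIntegral_congr_fun measurableSet_Ioo
    intro x _
    simp [hf, neg_sq]
  rw [hIco, hneg, two_mul]
end

section
/- Let N ≥ 1 and let (A,Ω) be a relative fractal drum in ℝ^N, and consider its embedding (A×{0}, Ω×(−1,1)) into ℝ^{N+1} (ℝ^{N+1} identified with ℝ^N × ℝ with the Euclidean norm). Then for every r ∈ ℝ: √3·2^{r−N}·M^{*r}(A,Ω) ≤ M^{*r}(A×{0}, Ω×(−1,1)) ≤ 2·M^{*r}(A,Ω), and the same two inequalities hold with the lower contents M_*^r in place of M^{*r}. Consequently, the upper relative box dimensions of (A,Ω) and of (A×{0}, Ω×(−1,1)) coincide, and likewise for the lower relative box dimensions. -/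
open MeasureTheory Metric Filter Set
open scoped ENNReal Topology

/-- The upper `r`-dimensional relative Minkowski content of the pair `(A, Ω)` in `ℝ^N`. -/
noncomputable def upMink (N : ℕ) (A Ω : Set (EuclideanSpace ℝ (Fin N))) (r : ℝ) : ℝ≥0∞ :=
  Filter.limsup
    (fun t : ℝ => volume (Metric.thickening t A ∩ Ω) / ENNReal.ofReal (t ^ ((N : ℝ) - r)))
    (𝓝[>] (0 : ℝ))

/-- The lower `r`-dimensional relative Minkowski content of the pair `(A, Ω)` in `ℝ^N`. -/
noncomputable def loMink (N : ℕ) (A Ω : Set (EuclideanSpace ℝ (Fin N))) (r : ℝ) : ℝ≥0∞ :=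
  Filter.liminf
    (fun t : ℝ => volume (Metric.thickening t A ∩ Ω) / ENNReal.ofReal (t ^ ((N : ℝ) - r)))
    (𝓝[>] (0 : ℝ))

/-- The upper relative box (Minkowski) dimension of `(A, Ω)`, as an extended real number. -/
noncomputable def ubDim (N : ℕ) (A Ω : Set (EuclideanSpace ℝ (Fin N))) : EReal :=
  sInf {x : EReal | ∃ r : ℝ, x = (r : EReal) ∧ upMink N A Ω r = 0}

/-- The lower relative box (Minkowski) dimension of `(A, Ω)`, as an extended real number. -/
noncomputable def lbDim (N : ℕ) (A Ω : Set (EuclideanSpace ℝ (Fin N))) : EReal :=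
  sInf {x : EReal | ∃ r : ℝ, x = (r : EReal) ∧ loMink N A Ω r = 0}

/-- The open `t`-neighborhood of `A × {0}` in `ℝ^{N+1} = ℝ^N × ℝ` endowed with the
Euclidean norm: the distance from `(x, y)` to `A × {0}` is `√(d(x,A)² + y²)`. -/
def embNbhd (N : ℕ) (A : Set (EuclideanSpace ℝ (Fin N))) (t : ℝ) :
    Set (EuclideanSpace ℝ (Fin N) × ℝ) :=
  {p | Real.sqrt (Metric.infDist p.1 A ^ 2 + p.2 ^ 2) < t}

/-- The upper `r`-dimensional relative Minkowski content of the embedded pair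
`(A × {0}, Ω × (-1,1))` in `ℝ^{N+1}`. -/
noncomputable def embUpMink (N : ℕ) (A Ω : Set (EuclideanSpace ℝ (Fin N))) (r : ℝ) : ℝ≥0∞ :=
  Filter.limsup
    (fun t : ℝ => volume (embNbhd N A t ∩ Ω ×ˢ Set.Ioo (-1 : ℝ) 1) /
      ENNReal.ofReal (t ^ ((N : ℝ) + 1 - r)))
    (𝓝[>] (0 : ℝ))

/-- The lower `r`-dimensional relative Minkowski content of the embedded pair
`(A × {0}, Ω × (-1,1))` in `ℝ^{N+1}`. -/
noncomputable def embLoMink (N : ℕ) (A Ω : Set (EuclideanSpace ℝ (Fin N))) (r : ℝ) : ℝ≥0∞ :=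
  Filter.liminf
    (fun t : ℝ => volume (embNbhd N A t ∩ Ω ×ˢ Set.Ioo (-1 : ℝ) 1) /
      ENNReal.ofReal (t ^ ((N : ℝ) + 1 - r)))
    (𝓝[>] (0 : ℝ))

/-- Upper relative box dimension of the embedded pair `(A × {0}, Ω × (-1,1))`. -/
noncomputable def embUbDim (N : ℕ) (A Ω : Set (EuclideanSpace ℝ (Fin N))) : EReal :=
  sInf {x : EReal | ∃ r : ℝ, x = (r : EReal) ∧ embUpMink N A Ω r = 0}

/-- Lower relative box dimension of the embedded pair `(A × {0}, Ω × (-1,1))`. -/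
noncomputable def embLbDim (N : ℕ) (A Ω : Set (EuclideanSpace ℝ (Fin N))) : EReal :=
  sInf {x : EReal | ∃ r : ℝ, x = (r : EReal) ∧ embLoMink N A Ω r = 0}

section AuxLemmas

open Filter

private lemma myLimsupMap {β γ : Type*} [CompleteLattice γ] (u : β → γ) {α : Type*}
    (m : α → β) (f : Filter α) :
    Filter.limsup u (Filter.map m f) = Filter.limsup (fun x => u (m x)) f := by
  simp only [Filter.limsup_eq, Filter.eventually_map]

private lemma myLiminfMap {β γ : Type*} [CompleteLattice γ] (u : β → γ) {α : Type*}
    (m : α → β) (f : Filter α) :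
    Filter.liminf u (Filter.map m f) = Filter.liminf (fun x => u (m x)) f := by
  simp only [Filter.liminf_eq, Filter.eventually_map]

private lemma myLiminfConstMul {α : Type*} {f : Filter α} {u : α → ℝ≥0∞} {a : ℝ≥0∞}
    (ha0 : a ≠ 0) (ha_top : a ≠ ⊤) :
    (f.liminf fun x => a * u x) = a * f.liminf u := by
  let g := fun x : ℝ≥0∞ => a * x
  have hg_bij : Function.Bijective g :=
    Function.bijective_iff_has_inverse.mpr
      ⟨fun x => a⁻¹ * x,
        ⟨fun x => by simp [g, ← mul_assoc, ENNReal.inv_mul_cancel ha0 ha_top], fun x => by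
          simp [g, ← mul_assoc, ENNReal.mul_inv_cancel ha0 ha_top]⟩⟩
  have hg_mono : StrictMono g :=
    Monotone.strictMono_of_injective
      (fun _ _ _ => by rwa [ENNReal.mul_le_mul_iff_right ha0 ha_top]) hg_bij.1
  let g_iso := StrictMono.orderIsoOfSurjective g hg_mono hg_bij.2
  exact (OrderIso.liminf_apply g_iso).symm

private lemma myMapHalf :
    Filter.map (fun t : ℝ => t / 2) (𝓝[>] (0 : ℝ)) = 𝓝[>] (0 : ℝ) := by
  apply le_antisymm
  · have h : Tendsto (fun t : ℝ => t / 2) (𝓝[>] (0 : ℝ)) (𝓝[>] (0 : ℝ)) := by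
      rw [tendsto_nhdsWithin_iff]
      constructor
      · have h := ((continuous_id.div_const (2 : ℝ)).tendsto (0 : ℝ)).mono_left
          (nhdsWithin_le_nhds (s := Set.Ioi (0 : ℝ)))
        simpa using h
      · filter_upwards [self_mem_nhdsWithin] with t ht
        exact half_pos (Set.mem_Ioi.mp ht)
    exact h
  · have h2 : Tendsto (fun t : ℝ => t * 2) (𝓝[>] (0 : ℝ)) (𝓝[>] (0 : ℝ)) := by
      rw [tendsto_nhdsWithin_iff]
      constructor
      · have h := ((continuous_mul_right (2:ℝ)).tendsto (0 : ℝ)).mono_left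
          (nhdsWithin_le_nhds (s := Set.Ioi (0 : ℝ)))
        simpa using h
      · filter_upwards [self_mem_nhdsWithin] with t ht
        exact mul_pos (Set.mem_Ioi.mp ht) two_pos
    have hcomp : ((fun t : ℝ => t / 2) ∘ fun t : ℝ => t * 2) = id := by
      funext t
      show t * 2 / 2 = t
      ring
    calc 𝓝[>] (0 : ℝ)
        = Filter.map (fun t : ℝ => t / 2) (Filter.map (fun t : ℝ => t * 2) (𝓝[>] (0 : ℝ))) := by
          rw [Filter.map_map, hcomp, Filter.map_id]
      _ ≤ Filter.map (fun t : ℝ => t / 2) (𝓝[>] (0 : ℝ)) := Filter.map_mono h2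

end AuxLemmas

/-- Embedding an RFD `(A, Ω)` of `ℝ^N` into `ℝ^{N+1}` as `(A × {0}, Ω × (-1,1))`: for every
`r ∈ ℝ` the upper (resp. lower) relative Minkowski contents of the embedded and original
pairs satisfy `√3·2^{r-N}·M^{*r}(A,Ω) ≤ M^{*r}(A×{0}, Ω×(-1,1)) ≤ 2·M^{*r}(A,Ω)` (and
likewise for `M_*^r`); consequently the upper and lower relative box dimensions are
preserved by the embedding. -/
theorem stmt15 (N : ℕ) (hN : 1 ≤ N) (A Ω : Set (EuclideanSpace ℝ (Fin N)))
    (hA : A.Nonempty) (hΩo : IsOpen Ω) (hΩv : volume Ω < ⊤)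
    (hΩδ : ∃ δ > 0, Ω ⊆ Metric.thickening δ A) :
    (∀ r : ℝ,
      ENNReal.ofReal (Real.sqrt 3 * (2 : ℝ) ^ (r - (N : ℝ))) * upMink N A Ω r
          ≤ embUpMink N A Ω r ∧
      embUpMink N A Ω r ≤ 2 * upMink N A Ω r ∧
      ENNReal.ofReal (Real.sqrt 3 * (2 : ℝ) ^ (r - (N : ℝ))) * loMink N A Ω r
          ≤ embLoMink N A Ω r ∧
      embLoMink N A Ω r ≤ 2 * loMink N A Ω r) ∧
    embUbDim N A Ω = ubDim N A Ω ∧ embLbDim N A Ω = lbDim N A Ω := by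
  have hup : ∀ r : ℝ, ∀ t ∈ Set.Ioi (0:ℝ),
      volume (embNbhd N A t ∩ Ω ×ˢ Set.Ioo (-1:ℝ) 1) / ENNReal.ofReal (t ^ ((N:ℝ) + 1 - r))
        ≤ 2 * (volume (Metric.thickening t A ∩ Ω) / ENNReal.ofReal (t ^ ((N:ℝ) - r))) := by
    intro r t ht
    rw [Set.mem_Ioi] at ht
    set a := volume (Metric.thickening t A ∩ Ω) with ha
    have hsub : embNbhd N A t ∩ Ω ×ˢ Set.Ioo (-1:ℝ) 1 ⊆
        (Metric.thickening t A ∩ Ω) ×ˢ Set.Ioo (-t) t := by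
      rintro ⟨x, y⟩ ⟨hp, hx, hy⟩
      have hsq : Real.sqrt (Metric.infDist x A ^ 2 + y ^ 2) < t := hp
      have hd0 : (0:ℝ) ≤ Metric.infDist x A := Metric.infDist_nonneg
      have hdlt : Metric.infDist x A < t := by
        have h1 : Metric.infDist x A ≤ Real.sqrt (Metric.infDist x A ^ 2 + y ^ 2) :=
          Real.le_sqrt_of_sq_le (by nlinarith)
        linarith
      have hylt : |y| < t := by
        have h1 : |y| ≤ Real.sqrt (Metric.infDist x A ^ 2 + y ^ 2) :=
          Real.le_sqrt_of_sq_le (by nlinarith [sq_abs y])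
        linarith
      exact ⟨⟨(Metric.mem_thickening_iff_infDist_lt hA).mpr hdlt, hx⟩,
        Set.mem_Ioo.mpr (abs_lt.mp hylt)⟩
    have hvol : volume (embNbhd N A t ∩ Ω ×ˢ Set.Ioo (-1:ℝ) 1) ≤ a * ENNReal.ofReal (2 * t) := by
      calc volume (embNbhd N A t ∩ Ω ×ˢ Set.Ioo (-1:ℝ) 1)
          ≤ volume ((Metric.thickening t A ∩ Ω) ×ˢ Set.Ioo (-t) t) := measure_mono hsub
        _ = a * ENNReal.ofReal (2 * t) := by
            rw [Measure.volume_eq_prod, Measure.prod_prod, Real.volume_Ioo]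
            congr 1
            ring
    have hpow : ENNReal.ofReal (t ^ ((N:ℝ) + 1 - r)) =
        ENNReal.ofReal t * ENNReal.ofReal (t ^ ((N:ℝ) - r)) := by
      rw [← ENNReal.ofReal_mul ht.le]
      congr 1
      rw [show (N:ℝ) + 1 - r = 1 + ((N:ℝ) - r) by ring, Real.rpow_add ht, Real.rpow_one]
    have ht0 : ENNReal.ofReal t ≠ 0 := (ENNReal.ofReal_pos.mpr ht).ne'
    calc volume (embNbhd N A t ∩ Ω ×ˢ Set.Ioo (-1:ℝ) 1) / ENNReal.ofReal (t ^ ((N:ℝ) + 1 - r))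
        ≤ (a * ENNReal.ofReal (2 * t)) / ENNReal.ofReal (t ^ ((N:ℝ) + 1 - r)) :=
          ENNReal.div_le_div_right hvol _
      _ = 2 * (a / ENNReal.ofReal (t ^ ((N:ℝ) - r))) := by
          rw [hpow, ENNReal.ofReal_mul (by norm_num : (0:ℝ) ≤ 2)]
          rw [show a * (ENNReal.ofReal 2 * ENNReal.ofReal t)
              = ENNReal.ofReal t * (ENNReal.ofReal 2 * a) by ring]
          rw [ENNReal.mul_div_mul_left _ _ ht0 ENNReal.ofReal_ne_top]
          rw [mul_div_assoc, ENNReal.ofReal_ofNat]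
  have hlo : ∀ r : ℝ, ∀ t ∈ Set.Ioo (0:ℝ) 1,
      ENNReal.ofReal (Real.sqrt 3 * (2:ℝ) ^ (r - (N:ℝ))) *
        (volume (Metric.thickening (t/2) A ∩ Ω) / ENNReal.ofReal ((t/2) ^ ((N:ℝ) - r)))
        ≤ volume (embNbhd N A t ∩ Ω ×ˢ Set.Ioo (-1:ℝ) 1) /
            ENNReal.ofReal (t ^ ((N:ℝ) + 1 - r)) := by
    intro r t ht
    obtain ⟨ht0, ht1⟩ := ht
    set a := volume (Metric.thickening (t/2) A ∩ Ω) with ha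
    have hs3 : (0:ℝ) < Real.sqrt 3 := Real.sqrt_pos.mpr (by norm_num)
    have hs3sq : Real.sqrt 3 ^ 2 = 3 := Real.sq_sqrt (by norm_num)
    have hs32 : Real.sqrt 3 < 2 := by nlinarith
    have hsub : (Metric.thickening (t/2) A ∩ Ω) ×ˢ
        Set.Ioo (-(Real.sqrt 3 / 2 * t)) (Real.sqrt 3 / 2 * t)
        ⊆ embNbhd N A t ∩ Ω ×ˢ Set.Ioo (-1:ℝ) 1 := by
      rintro ⟨x, y⟩ ⟨⟨hxA, hxΩ⟩, hy⟩
      rw [Set.mem_Ioo] at hy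
      have hd : Metric.infDist x A < t / 2 := (Metric.mem_thickening_iff_infDist_lt hA).mp hxA
      have hd0 : (0:ℝ) ≤ Metric.infDist x A := Metric.infDist_nonneg
      constructor
      · show Real.sqrt (Metric.infDist x A ^ 2 + y ^ 2) < t
        exact (Real.sqrt_lt' ht0).mpr (by nlinarith [hy.1, hy.2])
      · exact ⟨hxΩ, Set.mem_Ioo.mpr ⟨by nlinarith [hy.1], by nlinarith [hy.2]⟩⟩
    have hvol : a * ENNReal.ofReal (Real.sqrt 3 * t)
        ≤ volume (embNbhd N A t ∩ Ω ×ˢ Set.Ioo (-1:ℝ) 1) := by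
      calc a * ENNReal.ofReal (Real.sqrt 3 * t)
          = volume ((Metric.thickening (t/2) A ∩ Ω) ×ˢ
              Set.Ioo (-(Real.sqrt 3 / 2 * t)) (Real.sqrt 3 / 2 * t)) := by
            rw [Measure.volume_eq_prod, Measure.prod_prod, Real.volume_Ioo]
            congr 1
            ring
        _ ≤ _ := measure_mono hsub
    have hpow : ENNReal.ofReal (t ^ ((N:ℝ) + 1 - r)) =
        ENNReal.ofReal t * (ENNReal.ofReal ((2:ℝ) ^ ((N:ℝ) - r)) *
          ENNReal.ofReal ((t/2) ^ ((N:ℝ) - r))) := by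
      rw [← ENNReal.ofReal_mul (by positivity), ← ENNReal.ofReal_mul ht0.le]
      congr 1
      rw [show (N:ℝ) + 1 - r = 1 + ((N:ℝ) - r) by ring, Real.rpow_add ht0, Real.rpow_one]
      rw [← Real.mul_rpow (by norm_num) (by positivity)]
      congr 2
      ring
    have ht0' : ENNReal.ofReal t ≠ 0 := (ENNReal.ofReal_pos.mpr ht0).ne'
    have hd0' : ENNReal.ofReal ((2:ℝ) ^ ((N:ℝ) - r)) ≠ 0 :=
      (ENNReal.ofReal_pos.mpr (by positivity)).ne'
    have hinv : (ENNReal.ofReal ((2:ℝ) ^ ((N:ℝ) - r)))⁻¹ =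
        ENNReal.ofReal ((2:ℝ) ^ (r - (N:ℝ))) := by
      rw [← ENNReal.ofReal_inv_of_pos (by positivity), ← Real.rpow_neg (by norm_num)]
      congr 1
      ring
    calc ENNReal.ofReal (Real.sqrt 3 * (2:ℝ) ^ (r - (N:ℝ))) *
          (a / ENNReal.ofReal ((t/2) ^ ((N:ℝ) - r)))
        = (a * ENNReal.ofReal (Real.sqrt 3 * t)) / ENNReal.ofReal (t ^ ((N:ℝ) + 1 - r)) := by
          rw [hpow, ENNReal.ofReal_mul (Real.sqrt_nonneg 3),
            ENNReal.ofReal_mul (Real.sqrt_nonneg 3), ← hinv]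
          rw [show a * (ENNReal.ofReal (Real.sqrt 3) * ENNReal.ofReal t)
              = ENNReal.ofReal t * (ENNReal.ofReal (Real.sqrt 3) * a) by ring]
          rw [ENNReal.mul_div_mul_left _ _ ht0' ENNReal.ofReal_ne_top]
          simp only [div_eq_mul_inv]
          rw [ENNReal.mul_inv (Or.inl hd0') (Or.inl ENNReal.ofReal_ne_top)]
          ring
      _ ≤ _ := ENNReal.div_le_div_right hvol _
  have key : ∀ r : ℝ,
      ENNReal.ofReal (Real.sqrt 3 * (2 : ℝ) ^ (r - (N : ℝ))) * upMink N A Ω r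
          ≤ embUpMink N A Ω r ∧
      embUpMink N A Ω r ≤ 2 * upMink N A Ω r ∧
      ENNReal.ofReal (Real.sqrt 3 * (2 : ℝ) ^ (r - (N : ℝ))) * loMink N A Ω r
          ≤ embLoMink N A Ω r ∧
      embLoMink N A Ω r ≤ 2 * loMink N A Ω r := by
    intro r
    set F : ℝ → ℝ≥0∞ := fun t =>
      volume (Metric.thickening t A ∩ Ω) / ENNReal.ofReal (t ^ ((N : ℝ) - r)) with hF
    set G : ℝ → ℝ≥0∞ := fun t =>
      volume (embNbhd N A t ∩ Ω ×ˢ Set.Ioo (-1 : ℝ) 1) /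
        ENNReal.ofReal (t ^ ((N : ℝ) + 1 - r)) with hG
    set c : ℝ≥0∞ := ENNReal.ofReal (Real.sqrt 3 * (2:ℝ) ^ (r - (N:ℝ))) with hc
    have hc0 : c ≠ 0 := (ENNReal.ofReal_pos.mpr (by positivity)).ne'
    have hct : c ≠ ⊤ := ENNReal.ofReal_ne_top
    have hEvUp : ∀ᶠ t in 𝓝[>] (0:ℝ), G t ≤ 2 * F t := by
      filter_upwards [self_mem_nhdsWithin] with t ht using hup r t ht
    have hEvLo : ∀ᶠ t in 𝓝[>] (0:ℝ), c * F (t/2) ≤ G t := by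
      filter_upwards [Ioo_mem_nhdsGT_of_mem
        (by norm_num : (0:ℝ) ∈ Set.Ico (0:ℝ) 1)] with t ht using hlo r t ht
    have hUpF : upMink N A Ω r = Filter.limsup F (𝓝[>] (0:ℝ)) := rfl
    have hLoF : loMink N A Ω r = Filter.liminf F (𝓝[>] (0:ℝ)) := rfl
    have hUpG : embUpMink N A Ω r = Filter.limsup G (𝓝[>] (0:ℝ)) := rfl
    have hLoG : embLoMink N A Ω r = Filter.liminf G (𝓝[>] (0:ℝ)) := rfl
    have hUpHalf : Filter.limsup F (𝓝[>] (0:ℝ)) =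
        Filter.limsup (fun t => F (t/2)) (𝓝[>] (0:ℝ)) := by
      conv_lhs => rw [← myMapHalf]
      rw [myLimsupMap]
    have hLoHalf : Filter.liminf F (𝓝[>] (0:ℝ)) =
        Filter.liminf (fun t => F (t/2)) (𝓝[>] (0:ℝ)) := by
      conv_lhs => rw [← myMapHalf]
      rw [myLiminfMap]
    refine ⟨?_, ?_, ?_, ?_⟩
    · calc c * upMink N A Ω r
          = Filter.limsup (fun t => c * F (t/2)) (𝓝[>] (0:ℝ)) := by
            rw [hUpF, hUpHalf, ENNReal.limsup_const_mul_of_ne_top hct]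
        _ ≤ Filter.limsup G (𝓝[>] (0:ℝ)) := Filter.limsup_le_limsup hEvLo
        _ = embUpMink N A Ω r := hUpG.symm
    · calc embUpMink N A Ω r
          ≤ Filter.limsup (fun t => 2 * F t) (𝓝[>] (0:ℝ)) := by
            rw [hUpG]; exact Filter.limsup_le_limsup hEvUp
        _ = 2 * upMink N A Ω r := by
            rw [hUpF, ENNReal.limsup_const_mul_of_ne_top (by norm_num : (2:ℝ≥0∞) ≠ ⊤)]
    · calc c * loMink N A Ω r
          = Filter.liminf (fun t => c * F (t/2)) (𝓝[>] (0:ℝ)) := by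
            rw [hLoF, hLoHalf, myLiminfConstMul hc0 hct]
        _ ≤ Filter.liminf G (𝓝[>] (0:ℝ)) := Filter.liminf_le_liminf hEvLo
        _ = embLoMink N A Ω r := hLoG.symm
    · calc embLoMink N A Ω r
          ≤ Filter.liminf (fun t => 2 * F t) (𝓝[>] (0:ℝ)) := by
            rw [hLoG]; exact Filter.liminf_le_liminf hEvUp
        _ = 2 * loMink N A Ω r := by
            rw [hLoF, myLiminfConstMul (by norm_num : (2:ℝ≥0∞) ≠ 0)
              (by norm_num : (2:ℝ≥0∞) ≠ ⊤)]
  refine ⟨key, ?_, ?_⟩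
  · unfold embUbDim ubDim
    congr 1
    ext x
    simp only [Set.mem_setOf_eq]
    constructor
    · rintro ⟨r, hx, h⟩
      refine ⟨r, hx, ?_⟩
      obtain ⟨h1, -, -, -⟩ := key r
      rw [h] at h1
      have hc0 : ENNReal.ofReal (Real.sqrt 3 * (2:ℝ) ^ (r - (N:ℝ))) ≠ 0 :=
        (ENNReal.ofReal_pos.mpr (by positivity)).ne'
      exact (mul_eq_zero.mp (le_zero_iff.mp h1)).resolve_left hc0
    · rintro ⟨r, hx, h⟩
      refine ⟨r, hx, ?_⟩
      obtain ⟨-, h2, -, -⟩ := key r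
      rw [h, mul_zero] at h2
      exact le_zero_iff.mp h2
  · unfold embLbDim lbDim
    congr 1
    ext x
    simp only [Set.mem_setOf_eq]
    constructor
    · rintro ⟨r, hx, h⟩
      refine ⟨r, hx, ?_⟩
      obtain ⟨-, -, h3, -⟩ := key r
      rw [h] at h3
      have hc0 : ENNReal.ofReal (Real.sqrt 3 * (2:ℝ) ^ (r - (N:ℝ))) ≠ 0 :=
        (ENNReal.ofReal_pos.mpr (by positivity)).ne'
      exact (mul_eq_zero.mp (le_zero_iff.mp h3)).resolve_left hc0
    · rintro ⟨r, hx, h⟩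
      refine ⟨r, hx, ?_⟩
      obtain ⟨-, -, -, h4⟩ := key r
      rw [h, mul_zero] at h4
      exact le_zero_iff.mp h4
end

section
/- Let N ≥ 1, let (A,Ω) be a relative fractal drum in ℝ^N, and let δ ∈ (0,1). Then for every s ∈ ℂ with Re s > \overline{dim}_B(A,Ω), all integrals below converge absolutely and ∫_0^δ t^{s−N−2} |(A×{0})_t ∩ (Ω×(−1,1))|_{N+1} dt = 2·∫_0^{π/2} (sin τ)^{N+1−s} · ( ∫_0^{δ·sin τ} t^{s−N−1}|A_t ∩ Ω|_N dt ) dτ; i.e., the relative tube zeta function of the embedded RFD (A×{0}, Ω×(−1,1)) in ℝ^{N+1} satisfies ζ̃_{A×{0},Ω×(−1,1)}(s;δ) = 2∫_0^{π/2} ζ̃_{A,Ω}(s; δ sin τ)/(sin τ)^{s−N−1} dτ. -/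
open MeasureTheory Metric Filter Set
open scoped ENNReal Topology

section Aux

variable {N : ℕ} {A Ω : Set (EuclideanSpace ℝ (Fin N))}

lemma measV (A Ω : Set (EuclideanSpace ℝ (Fin N))) :
    Measurable fun t : ℝ => (volume (Metric.thickening t A ∩ Ω)).toReal := by
  apply ENNReal.measurable_toReal.comp
  have hmono : Monotone fun t : ℝ => volume (Metric.thickening t A ∩ Ω) := fun a b hab =>
    measure_mono (inter_subset_inter_left Ω (thickening_mono hab A))
  exact hmono.measurable

lemma exists_bound (hΩv : volume Ω < ⊤) {σ : ℝ} (hs : ubDim N A Ω < (σ : EReal)) :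
    ∃ r C : ℝ, r < σ ∧ r < (N : ℝ) + 2 ∧ 0 < C ∧
      ∀ t ∈ Set.Ioc (0:ℝ) 1,
        (volume (Metric.thickening t A ∩ Ω)).toReal ≤ C * t ^ ((N:ℝ) - r) := by
  obtain ⟨x, hx, hlt⟩ := sInf_lt_iff.mp hs
  obtain ⟨r₀, rfl, h0⟩ := hx
  rw [EReal.coe_lt_coe_iff] at hlt
  set M : ℝ := (volume Ω).toReal with hM
  have hMnn : 0 ≤ M := ENNReal.toReal_nonneg
  have hVle : ∀ t : ℝ, (volume (Metric.thickening t A ∩ Ω)).toReal ≤ M := fun t =>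
    ENNReal.toReal_mono hΩv.ne (measure_mono inter_subset_right)
  rcases le_or_gt r₀ ((N:ℝ)+1) with hr₀ | hr₀
  · set e : ℝ := (N:ℝ) - r₀ with he
    have hev : ∀ᶠ t in 𝓝[>] (0:ℝ),
        volume (Metric.thickening t A ∩ Ω) / ENNReal.ofReal (t ^ e) < 1 := by
      apply eventually_lt_of_limsup_lt (hu := ⟨⊤, eventually_map.2
        (Eventually.of_forall fun _ => le_top)⟩)
      rw [show Filter.limsup
          (fun t : ℝ => volume (Metric.thickening t A ∩ Ω) / ENNReal.ofReal (t ^ e))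
          (𝓝[>] (0 : ℝ)) = upMink N A Ω r₀ from rfl, h0]
      exact zero_lt_one
    obtain ⟨u, hu, huIoo⟩ := mem_nhdsGT_iff_exists_Ioo_subset.mp hev
    rw [Set.mem_Ioi] at hu
    set t1 : ℝ := min (u/2) 1 with ht1def
    have ht1pos : 0 < t1 := lt_min (by linarith) one_pos
    have ht1le1 : t1 ≤ 1 := min_le_right _ _
    have ht1ltu : t1 < u := lt_of_le_of_lt (min_le_left _ _) (by linarith)
    have hsmall : ∀ t ∈ Set.Ioc (0:ℝ) t1,
        (volume (Metric.thickening t A ∩ Ω)).toReal ≤ t ^ e := by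
      intro t ht
      have h1 : volume (Metric.thickening t A ∩ Ω) / ENNReal.ofReal (t ^ e) < 1 :=
        huIoo ⟨ht.1, lt_of_le_of_lt ht.2 ht1ltu⟩
      have hb0 : ENNReal.ofReal (t ^ e) ≠ 0 := by
        simp only [ne_eq, ENNReal.ofReal_eq_zero, not_le]
        exact Real.rpow_pos_of_pos ht.1 e
      have hbt : ENNReal.ofReal (t ^ e) ≠ ⊤ := ENNReal.ofReal_ne_top
      have hle : volume (Metric.thickening t A ∩ Ω) ≤ ENNReal.ofReal (t ^ e) := by
        calc volume (Metric.thickening t A ∩ Ω)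
            = volume (Metric.thickening t A ∩ Ω) / ENNReal.ofReal (t ^ e)
              * ENNReal.ofReal (t ^ e) := (ENNReal.div_mul_cancel hb0 hbt).symm
          _ ≤ 1 * ENNReal.ofReal (t ^ e) := mul_le_mul_left h1.le _
          _ = ENNReal.ofReal (t ^ e) := one_mul _
      exact ENNReal.toReal_le_of_le_ofReal (Real.rpow_nonneg ht.1.le e) hle
    set m : ℝ := min (t1 ^ e) 1 with hmdef
    have hmpos : 0 < m := lt_min (Real.rpow_pos_of_pos ht1pos e) one_pos
    have hme : ∀ t ∈ Set.Ioc (0:ℝ) 1, t1 < t → m ≤ t ^ e := by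
      intro t ht htt
      rcases le_or_gt 0 e with hee | hee
      · exact le_trans (min_le_left _ _) (Real.rpow_le_rpow ht1pos.le htt.le hee)
      · refine le_trans (min_le_right _ _) ?_
        exact Real.one_le_rpow_of_pos_of_le_one_of_nonpos ht.1 ht.2 hee.le
    refine ⟨r₀, max 1 ((M+1)/m), hlt, by linarith, lt_of_lt_of_le one_pos (le_max_left _ _), ?_⟩
    intro t ht
    by_cases htt : t ≤ t1
    · calc (volume (Metric.thickening t A ∩ Ω)).toReal ≤ t ^ e := hsmall t ⟨ht.1, htt⟩
        _ = 1 * t ^ e := (one_mul _).symm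
        _ ≤ max 1 ((M+1)/m) * t ^ e :=
            mul_le_mul_of_nonneg_right (le_max_left _ _) (Real.rpow_nonneg ht.1.le e)
    · have hmt := hme t ht (not_le.mp htt)
      calc (volume (Metric.thickening t A ∩ Ω)).toReal ≤ M := hVle t
        _ ≤ (M+1)/m * m := by
            rw [div_mul_cancel₀ _ hmpos.ne']; linarith
        _ ≤ max 1 ((M+1)/m) * t ^ e :=
            mul_le_mul (le_max_right _ _) hmt hmpos.le
              (le_trans zero_le_one (le_max_left _ _))
  · refine ⟨(N:ℝ)+1, M+1, lt_trans hr₀ hlt, by linarith, by linarith, ?_⟩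
    intro t ht
    have he : (N:ℝ) - ((N:ℝ)+1) = -1 := by ring
    rw [he]
    have h1 : (1:ℝ) ≤ t ^ (-1:ℝ) :=
      Real.one_le_rpow_of_pos_of_le_one_of_nonpos ht.1 ht.2 (by norm_num)
    calc (volume (Metric.thickening t A ∩ Ω)).toReal ≤ M := hVle t
      _ = M * 1 := (mul_one _).symm
      _ ≤ (M+1) * t ^ (-1:ℝ) := mul_le_mul (by linarith) h1 zero_le_one (by linarith)

end Aux

section Aux2

variable {N : ℕ} {A Ω : Set (EuclideanSpace ℝ (Fin N))}

lemma integrableOn_g {r C : ℝ} {s : ℂ} (hr : r < s.re)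
    (hbd : ∀ t ∈ Set.Ioc (0:ℝ) 1,
      (volume (Metric.thickening t A ∩ Ω)).toReal ≤ C * t ^ ((N:ℝ) - r))
    {a : ℝ} (ha : 0 < a) (ha1 : a ≤ 1) :
    IntegrableOn (fun t : ℝ => (t : ℂ) ^ (s - (N:ℂ) - 1) *
      ((volume (Metric.thickening t A ∩ Ω)).toReal : ℂ)) (Set.Ioo 0 a) volume := by
  have hmeas : Measurable fun t : ℝ => (t : ℂ) ^ (s - (N:ℂ) - 1) *
      ((volume (Metric.thickening t A ∩ Ω)).toReal : ℂ) :=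
    (Complex.measurable_ofReal.pow measurable_const).mul
      (Complex.measurable_ofReal.comp (measV A Ω))
  have hdom : IntegrableOn (fun t : ℝ => C * t ^ (s.re - r - 1)) (Set.Ioo 0 a) volume :=
    ((intervalIntegral.integrableOn_Ioo_rpow_iff ha).mpr (by linarith)).const_mul C
  apply Integrable.mono' hdom hmeas.aestronglyMeasurable
  filter_upwards [ae_restrict_mem measurableSet_Ioo] with t ht
  have hre : (s - (N:ℂ) - 1).re = s.re - (N:ℝ) - 1 := by
    simp [Complex.sub_re, Complex.natCast_re]
  have h1 : ‖(t : ℂ) ^ (s - (N:ℂ) - 1)‖ = t ^ (s.re - (N:ℝ) - 1) := by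
    rw [Complex.norm_cpow_eq_rpow_re_of_pos ht.1, hre]
  have ht1 : t ∈ Set.Ioc (0:ℝ) 1 := ⟨ht.1, le_trans ht.2.le ha1⟩
  rw [norm_mul, h1, Complex.norm_real, Real.norm_eq_abs,
    abs_of_nonneg ENNReal.toReal_nonneg]
  calc t ^ (s.re - (N:ℝ) - 1) * (volume (Metric.thickening t A ∩ Ω)).toReal
      ≤ t ^ (s.re - (N:ℝ) - 1) * (C * t ^ ((N:ℝ) - r)) :=
        mul_le_mul_of_nonneg_left (hbd t ht1) (Real.rpow_nonneg ht.1.le _)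
    _ = C * t ^ (s.re - r - 1) := by
        rw [show s.re - r - 1 = (s.re - (N:ℝ) - 1) + ((N:ℝ) - r) by ring,
          Real.rpow_add ht.1]; ring

lemma slice_vol (hA : A.Nonempty) {t : ℝ} (ht : 0 < t) (ht1 : t < 1) (y : ℝ) :
    volume ((fun x => (x, y)) ⁻¹' (embNbhd N A t ∩ Ω ×ˢ Set.Ioo (-1:ℝ) 1))
      = Set.indicator (Set.Ioo (-t) t)
          (fun y => volume (Metric.thickening (Real.sqrt (t^2 - y^2)) A ∩ Ω)) y := by
  rcases lt_or_ge (|y|) t with hy | hy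
  · obtain ⟨hy1, hy2⟩ := abs_lt.mp hy
    rw [Set.indicator_of_mem (Set.mem_Ioo.mpr ⟨hy1, hy2⟩)]
    congr 1
    ext x
    simp only [Set.mem_preimage, Set.mem_inter_iff, embNbhd, Set.mem_setOf_eq,
      Set.mem_prod, Set.mem_Ioo]
    constructor
    · rintro ⟨hst, hxΩ, -⟩
      refine ⟨?_, hxΩ⟩
      rw [mem_thickening_iff_infDist_lt hA, Real.lt_sqrt infDist_nonneg]
      have h2 := (Real.sqrt_lt' ht).mp hst
      nlinarith
    · rintro ⟨hthick, hxΩ⟩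
      rw [mem_thickening_iff_infDist_lt hA, Real.lt_sqrt infDist_nonneg] at hthick
      refine ⟨(Real.sqrt_lt' ht).mpr (by nlinarith), hxΩ, by nlinarith, by nlinarith⟩
  · have hempty : (fun x => (x, y)) ⁻¹' (embNbhd N A t ∩ Ω ×ˢ Set.Ioo (-1:ℝ) 1)
        = (∅ : Set (EuclideanSpace ℝ (Fin N))) := by
      ext x
      simp only [Set.mem_preimage, Set.mem_inter_iff, embNbhd, Set.mem_setOf_eq,
        Set.mem_prod, Set.mem_Ioo, Set.mem_empty_iff_false, iff_false, not_and]
      intro hst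
      exfalso
      have h3 : t ≤ Real.sqrt (Metric.infDist x A ^ 2 + y ^ 2) := by
        refine le_trans hy ?_
        rw [← Real.sqrt_sq_eq_abs]
        exact Real.sqrt_le_sqrt (by nlinarith [sq_nonneg (Metric.infDist x A)])
      linarith
    rw [hempty, measure_empty, Set.indicator_of_notMem (by
      simp only [Set.mem_Ioo, not_and_or, not_lt]
      rcases le_or_gt 0 y with h0 | h0
      · right; rwa [abs_of_nonneg h0] at hy
      · left; rw [abs_of_neg h0] at hy; linarith)]

lemma Wenn_eq (hA : A.Nonempty) (hΩo : IsOpen Ω) {t : ℝ} (ht : 0 < t) (ht1 : t < 1) :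
    volume (embNbhd N A t ∩ Ω ×ˢ Set.Ioo (-1:ℝ) 1)
      = ∫⁻ y in Set.Ioo (-t) t,
          volume (Metric.thickening (Real.sqrt (t^2 - y^2)) A ∩ Ω) := by
  have hSm : MeasurableSet (embNbhd N A t ∩ Ω ×ˢ Set.Ioo (-1:ℝ) 1) := by
    apply MeasurableSet.inter
    · have hc : Continuous fun p : EuclideanSpace ℝ (Fin N) × ℝ =>
          Real.sqrt (Metric.infDist p.1 A ^ 2 + p.2 ^ 2) :=
        Real.continuous_sqrt.comp ((((continuous_infDist_pt A).comp continuous_fst).pow 2).add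
          (continuous_snd.pow 2))
      exact (isOpen_Iio.preimage hc).measurableSet
    · exact (hΩo.prod isOpen_Ioo).measurableSet
  rw [← lintegral_indicator measurableSet_Ioo _, Measure.volume_eq_prod _ _,
    Measure.prod_apply_symm hSm]
  exact lintegral_congr fun y => slice_vol hA ht ht1 y

end Aux2

section Aux3

variable {N : ℕ} {A Ω : Set (EuclideanSpace ℝ (Fin N))}

lemma measVE (A Ω : Set (EuclideanSpace ℝ (Fin N))) :
    Measurable fun t : ℝ => volume (Metric.thickening t A ∩ Ω) := by
  have hmono : Monotone fun t : ℝ => volume (Metric.thickening t A ∩ Ω) := fun a b hab =>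
    measure_mono (inter_subset_inter_left Ω (thickening_mono hab A))
  exact hmono.measurable

lemma W_eq (hA : A.Nonempty) (hΩo : IsOpen Ω) (hΩv : volume Ω < ⊤)
    {t : ℝ} (ht : 0 < t) (ht1 : t < 1) :
    (volume (embNbhd N A t ∩ Ω ×ˢ Set.Ioo (-1:ℝ) 1)).toReal
      = 2 * ∫ τ in Set.Ioo (0:ℝ) (Real.pi/2),
          (t * Real.sin τ) * (volume (Metric.thickening (t * Real.sin τ) A ∩ Ω)).toReal := by
  have hπ := Real.pi_pos
  set h : ℝ → ℝ := fun y => (volume (Metric.thickening (Real.sqrt (t^2 - y^2)) A ∩ Ω)).toReal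
    with hh
  have hsqc : Continuous fun y : ℝ => Real.sqrt (t^2 - y^2) :=
    Real.continuous_sqrt.comp (continuous_const.sub (continuous_id.pow 2))
  have hmE : Measurable fun y : ℝ =>
      volume (Metric.thickening (Real.sqrt (t^2 - y^2)) A ∩ Ω) :=
    (measVE A Ω).comp hsqc.measurable
  have hhmeas : Measurable h := ENNReal.measurable_toReal.comp hmE
  have step1 : (volume (embNbhd N A t ∩ Ω ×ˢ Set.Ioo (-1:ℝ) 1)).toReal
      = ∫ y in Set.Ioo (-t) t, h y := by
    rw [Wenn_eq hA hΩo ht ht1, ← integral_toReal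
      hmE.aemeasurable
      (Eventually.of_forall fun y => lt_of_le_of_lt (measure_mono inter_subset_right) hΩv)]
  have hIntAll : IntegrableOn h (Set.Ioc (-t) t) volume := by
    refine Integrable.mono' (g := fun _ => (volume Ω).toReal)
      ((integrableOn_const_iff).mpr (Or.inr measure_Ioc_lt_top))
      hhmeas.aestronglyMeasurable ?_
    exact Eventually.of_forall fun y => by
      rw [Real.norm_eq_abs, abs_of_nonneg ENNReal.toReal_nonneg]
      exact ENNReal.toReal_mono hΩv.ne (measure_mono inter_subset_right)
  have hunion : Set.Ioc (-t) 0 ∪ Set.Ioo 0 t = Set.Ioo (-t) t := by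
    ext y; simp only [Set.mem_union, Set.mem_Ioc, Set.mem_Ioo]
    constructor
    · rintro (⟨h1,h2⟩|⟨h1,h2⟩) <;> constructor <;> linarith
    · rintro ⟨h1,h2⟩
      rcases le_or_gt y 0 with h3|h3
      · exact Or.inl ⟨h1, h3⟩
      · exact Or.inr ⟨h3, h2⟩
  have step2 : ∫ y in Set.Ioo (-t) t, h y
      = (∫ y in Set.Ioc (-t) 0, h y) + ∫ y in Set.Ioo 0 t, h y := by
    rw [← hunion, setIntegral_union
      (Set.disjoint_left.mpr fun y hy1 hy2 => absurd hy1.2 (not_le.mpr hy2.1))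
      measurableSet_Ioo
      (hIntAll.mono_set fun y hy => ⟨hy.1, le_trans hy.2 ht.le⟩)
      (hIntAll.mono_set fun y hy => ⟨lt_trans (neg_lt_zero.mpr ht) hy.1, hy.2.le⟩)]
  have step3 : ∫ y in Set.Ioc (-t) 0, h y = ∫ y in Set.Ioo 0 t, h y := by
    rw [integral_Ioc_eq_integral_Ioo]
    have himg : Set.Ioo (-t) 0 = (fun y : ℝ => -y) '' Set.Ioo 0 t := by
      ext y; simp only [Set.mem_image, Set.mem_Ioo]
      constructor
      · rintro ⟨h1,h2⟩; exact ⟨-y, ⟨by linarith, by linarith⟩, by ring⟩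
      · rintro ⟨z, ⟨h1,h2⟩, rfl⟩; constructor <;> linarith
    rw [himg, integral_image_eq_integral_abs_deriv_smul (f' := fun _ => (-1:ℝ))
      measurableSet_Ioo (fun x _ => (hasDerivAt_neg x).hasDerivWithinAt)
      neg_injective.injOn h]
    apply setIntegral_congr_fun measurableSet_Ioo
    intro y hy
    simp only [hh, abs_neg, abs_one, one_smul, neg_sq]
  have himg2 : (fun τ => t * Real.cos τ) '' Set.Ioo 0 (Real.pi/2) = Set.Ioo 0 t := by
    ext y; simp only [Set.mem_image, Set.mem_Ioo]
    constructor
    · rintro ⟨τ, ⟨h1, h2⟩, rfl⟩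
      have hc1 : 0 < Real.cos τ := Real.cos_pos_of_mem_Ioo ⟨by linarith, h2⟩
      have hc2 : Real.cos τ < 1 := by
        have := Real.cos_lt_cos_of_nonneg_of_le_pi (le_refl 0) (by linarith) h1
        rwa [Real.cos_zero] at this
      exact ⟨by positivity, by nlinarith⟩
    · rintro ⟨h1, h2⟩
      have hyt1 : y / t < 1 := by rw [div_lt_one ht]; exact h2
      have hyt0 : 0 < y / t := by positivity
      refine ⟨Real.arccos (y/t), ⟨Real.arccos_pos.mpr hyt1,
        Real.arccos_lt_pi_div_two.mpr hyt0⟩, ?_⟩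
      rw [Real.cos_arccos (by linarith) (by linarith)]
      field_simp
  have step4 : ∫ y in Set.Ioo 0 t, h y = ∫ τ in Set.Ioo (0:ℝ) (Real.pi/2),
      (t * Real.sin τ) * (volume (Metric.thickening (t * Real.sin τ) A ∩ Ω)).toReal := by
    rw [← himg2, integral_image_eq_integral_abs_deriv_smul
      (f' := fun τ => t * -Real.sin τ) measurableSet_Ioo
      (fun τ _ => ((Real.hasDerivAt_cos τ).const_mul t).hasDerivWithinAt)
      (fun a ha b hb hab => Real.injOn_cos ⟨ha.1.le, by linarith [ha.2]⟩
        ⟨hb.1.le, by linarith [hb.2]⟩ (mul_left_cancel₀ ht.ne' hab)) h]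
    apply setIntegral_congr_fun measurableSet_Ioo
    intro τ hτ
    have hsp : 0 < Real.sin τ := Real.sin_pos_of_pos_of_lt_pi hτ.1 (by linarith [hτ.2])
    have habs : |t * -Real.sin τ| = t * Real.sin τ := by
      rw [abs_mul, abs_of_pos ht, abs_neg, abs_of_pos hsp]
    have hsq : t^2 - (t * Real.cos τ)^2 = (t * Real.sin τ)^2 := by
      have := Real.sin_sq_add_cos_sq τ; nlinarith
    simp only [smul_eq_mul, habs, hh, hsq,
      Real.sqrt_sq (by positivity : (0:ℝ) ≤ t * Real.sin τ)]
  rw [step1, step2, step3, step4]; ring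

end Aux3

/-- For an RFD `(A, Ω)` in `ℝ^N`, `δ ∈ (0,1)` and `Re s > dim_B(A, Ω)`, the relative tube
zeta function of the embedded RFD `(A×{0}, Ω×(-1,1))` in `ℝ^{N+1}` satisfies
`ζ̃_{A×{0},Ω×(-1,1)}(s; δ) = 2 ∫_0^{π/2} (sin τ)^{N+1-s} ζ̃_{A,Ω}(s; δ sin τ) dτ`,
with all integrals absolutely convergent. -/
theorem stmt16 (N : ℕ) (hN : 1 ≤ N) (A Ω : Set (EuclideanSpace ℝ (Fin N)))
    (hA : A.Nonempty) (hΩo : IsOpen Ω) (hΩv : volume Ω < ⊤)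
    (hΩδ : ∃ δ' > 0, Ω ⊆ Metric.thickening δ' A)
    (δ : ℝ) (hδ : δ ∈ Set.Ioo (0 : ℝ) 1)
    (s : ℂ) (hs : ubDim N A Ω < (s.re : EReal)) :
    MeasureTheory.IntegrableOn
        (fun t : ℝ => (t : ℂ) ^ (s - (N : ℂ) - 2) *
          ((volume (embNbhd N A t ∩ Ω ×ˢ Set.Ioo (-1 : ℝ) 1)).toReal : ℂ))
        (Set.Ioo 0 δ) volume ∧
    (∀ τ ∈ Set.Ioo (0 : ℝ) (Real.pi / 2),
      MeasureTheory.IntegrableOn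
        (fun t : ℝ => (t : ℂ) ^ (s - (N : ℂ) - 1) *
          ((volume (Metric.thickening t A ∩ Ω)).toReal : ℂ))
        (Set.Ioo 0 (δ * Real.sin τ)) volume) ∧
    MeasureTheory.IntegrableOn
        (fun τ : ℝ => (Real.sin τ : ℂ) ^ ((N : ℂ) + 1 - s) *
          ∫ t in Set.Ioo (0 : ℝ) (δ * Real.sin τ), (t : ℂ) ^ (s - (N : ℂ) - 1) *
            ((volume (Metric.thickening t A ∩ Ω)).toReal : ℂ))
        (Set.Ioo 0 (Real.pi / 2)) volume ∧
    ∫ t in Set.Ioo (0 : ℝ) δ, (t : ℂ) ^ (s - (N : ℂ) - 2) *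
          ((volume (embNbhd N A t ∩ Ω ×ˢ Set.Ioo (-1 : ℝ) 1)).toReal : ℂ)
      = 2 * ∫ τ in Set.Ioo (0 : ℝ) (Real.pi / 2),
          (Real.sin τ : ℂ) ^ ((N : ℂ) + 1 - s) *
            ∫ t in Set.Ioo (0 : ℝ) (δ * Real.sin τ), (t : ℂ) ^ (s - (N : ℂ) - 1) *
              ((volume (Metric.thickening t A ∩ Ω)).toReal : ℂ) := by
  have hπ := Real.pi_pos
  have hδ0 := hδ.1
  have hδ1 := hδ.2
  obtain ⟨r, C, hr, hrN2, hC, hbd⟩ := exists_bound hΩv hs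
  set F : ℝ → ℝ → ℂ := fun t τ => (t:ℂ)^(s-(N:ℂ)-1) *
    ((Real.sin τ * (volume (Metric.thickening (t * Real.sin τ) A ∩ Ω)).toReal : ℝ) : ℂ)
    with hF
  -- conjunct 2
  have h2 : ∀ τ ∈ Set.Ioo (0:ℝ) (Real.pi/2),
      IntegrableOn (fun t : ℝ => (t : ℂ) ^ (s - (N : ℂ) - 1) *
        ((volume (Metric.thickening t A ∩ Ω)).toReal : ℂ))
        (Set.Ioo 0 (δ * Real.sin τ)) volume := by
    intro τ hτ
    have hsp : 0 < Real.sin τ := Real.sin_pos_of_pos_of_lt_pi hτ.1 (by linarith [hτ.2])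
    have hs1 : Real.sin τ ≤ 1 := Real.sin_le_one τ
    exact integrableOn_g hr hbd (by positivity) (by nlinarith)
  -- Fubini integrability
  have hFmeas : Measurable (Function.uncurry F) := by
    apply Measurable.mul
    · exact (Complex.measurable_ofReal.comp measurable_fst).pow measurable_const
    · exact Complex.measurable_ofReal.comp
        ((Real.measurable_sin.comp measurable_snd).mul
          ((measV A Ω).comp (measurable_fst.mul (Real.measurable_sin.comp measurable_snd))))
  set e2 : ℝ := (N:ℝ) - r + 1 with he2
  set K : ℝ := max 1 ((2/Real.pi) ^ e2) with hK
  have hK1 : (1:ℝ) ≤ K := le_max_left _ _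
  have hB1 : Integrable (fun t : ℝ => C * t ^ (s.re - r - 1))
      (volume.restrict (Set.Ioo (0:ℝ) δ)) :=
    ((intervalIntegral.integrableOn_Ioo_rpow_iff hδ0).mpr (by linarith)).const_mul C
  have hB2 : Integrable (fun τ : ℝ => K * τ ^ e2)
      (volume.restrict (Set.Ioo (0:ℝ) (Real.pi/2))) :=
    ((intervalIntegral.integrableOn_Ioo_rpow_iff (by positivity)).mpr
      (by rw [he2]; linarith)).const_mul K
  have hFint : Integrable (Function.uncurry F)
      ((volume.restrict (Set.Ioo (0:ℝ) δ)).prod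
        (volume.restrict (Set.Ioo (0:ℝ) (Real.pi/2)))) := by
    apply Integrable.mono' (hB1.mul_prod hB2) hFmeas.aestronglyMeasurable
    rw [Measure.prod_restrict]
    filter_upwards [ae_restrict_mem (measurableSet_Ioo.prod measurableSet_Ioo)] with p hp
    obtain ⟨hp1, hp2⟩ := hp
    have ht0 : 0 < p.1 := hp1.1
    have hsp : 0 < Real.sin p.2 := Real.sin_pos_of_pos_of_lt_pi hp2.1 (by linarith [hp2.2])
    have hs1 : Real.sin p.2 ≤ 1 := Real.sin_le_one _
    have hts : p.1 * Real.sin p.2 ∈ Set.Ioc (0:ℝ) 1 :=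
      ⟨by positivity, by nlinarith [hp1.2]⟩
    have hVb := hbd _ hts
    have hnorm : ‖Function.uncurry F p‖
        = p.1 ^ (s.re - (N:ℝ) - 1) * (Real.sin p.2 *
            (volume (Metric.thickening (p.1 * Real.sin p.2) A ∩ Ω)).toReal) := by
      show ‖(p.1:ℂ)^(s-(N:ℂ)-1) * ((Real.sin p.2 *
        (volume (Metric.thickening (p.1 * Real.sin p.2) A ∩ Ω)).toReal : ℝ) : ℂ)‖ = _
      rw [norm_mul, Complex.norm_cpow_eq_rpow_re_of_pos ht0,
        Complex.norm_real, Real.norm_eq_abs,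
        abs_of_nonneg (mul_nonneg hsp.le ENNReal.toReal_nonneg),
        show (s - (N:ℂ) - 1).re = s.re - (N:ℝ) - 1 by simp [Complex.sub_re, Complex.natCast_re]]
    rw [hnorm]
    calc p.1 ^ (s.re - (N:ℝ) - 1) * (Real.sin p.2 *
            (volume (Metric.thickening (p.1 * Real.sin p.2) A ∩ Ω)).toReal)
        ≤ p.1 ^ (s.re - (N:ℝ) - 1) * (Real.sin p.2 *
            (C * (p.1 * Real.sin p.2) ^ ((N:ℝ) - r))) :=
          mul_le_mul_of_nonneg_left (mul_le_mul_of_nonneg_left hVb hsp.le)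
            (Real.rpow_nonneg ht0.le _)
      _ = (C * p.1 ^ (s.re - r - 1)) * (Real.sin p.2 ^ e2) := by
          rw [Real.mul_rpow ht0.le hsp.le,
            show s.re - r - 1 = (s.re - (N:ℝ) - 1) + ((N:ℝ) - r) by ring,
            Real.rpow_add ht0, he2, show (N:ℝ) - r + 1 = 1 + ((N:ℝ)-r) by ring,
            Real.rpow_add hsp, Real.rpow_one]
          ring
      _ ≤ (C * p.1 ^ (s.re - r - 1)) * (K * p.2 ^ e2) := by
          apply mul_le_mul_of_nonneg_left _ (by positivity)
          rcases le_or_gt 0 e2 with he | he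
          · calc Real.sin p.2 ^ e2 ≤ p.2 ^ e2 :=
                Real.rpow_le_rpow hsp.le (Real.sin_le hp2.1.le) he
              _ ≤ K * p.2 ^ e2 :=
                le_mul_of_one_le_left (Real.rpow_nonneg hp2.1.le _) hK1
          · calc Real.sin p.2 ^ e2 ≤ (2/Real.pi * p.2) ^ e2 :=
                Real.rpow_le_rpow_of_nonpos (mul_pos (div_pos two_pos hπ) hp2.1)
                  (Real.mul_le_sin hp2.1.le hp2.2.le) he.le
              _ = (2/Real.pi) ^ e2 * p.2 ^ e2 := Real.mul_rpow (by positivity) hp2.1.le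
              _ ≤ K * p.2 ^ e2 :=
                mul_le_mul_of_nonneg_right (le_max_right _ _) (Real.rpow_nonneg hp2.1.le _)
  -- pointwise identity for the RHS integrand
  have hZ : ∀ τ ∈ Set.Ioo (0:ℝ) (Real.pi/2),
      (Real.sin τ : ℂ) ^ ((N:ℂ) + 1 - s) *
        (∫ u in Set.Ioo (0:ℝ) (δ * Real.sin τ), (u:ℂ)^(s-(N:ℂ)-1) *
          ((volume (Metric.thickening u A ∩ Ω)).toReal : ℂ))
        = ∫ t in Set.Ioo (0:ℝ) δ, F t τ := by
    intro τ hτ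
    have hsp : 0 < Real.sin τ := Real.sin_pos_of_pos_of_lt_pi hτ.1 (by linarith [hτ.2])
    have hsne : (Real.sin τ : ℂ) ≠ 0 := Complex.ofReal_ne_zero.mpr hsp.ne'
    have himg : (fun t : ℝ => Real.sin τ * t) '' Set.Ioo 0 δ
        = Set.Ioo 0 (δ * Real.sin τ) := by
      rw [Set.image_mul_left_Ioo hsp, mul_zero, mul_comm]
    have hcong : Set.EqOn (fun t : ℝ => |Real.sin τ| •
        (((Real.sin τ * t : ℝ):ℂ)^(s-(N:ℂ)-1) *
          ((volume (Metric.thickening (Real.sin τ * t) A ∩ Ω)).toReal : ℂ)))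
        (fun t : ℝ => (Real.sin τ : ℂ)^(s-(N:ℂ)-1) * F t τ) (Set.Ioo 0 δ) := by
      intro t htt
      have h1 : ((Real.sin τ * t : ℝ) : ℂ) ^ (s-(N:ℂ)-1)
          = (Real.sin τ:ℂ)^(s-(N:ℂ)-1) * (t:ℂ)^(s-(N:ℂ)-1) := by
        rw [Complex.ofReal_mul]
        exact Complex.mul_cpow_ofReal_nonneg hsp.le htt.1.le _
      simp only [hF]
      rw [h1, abs_of_pos hsp, mul_comm (Real.sin τ) t, Complex.real_smul]
      push_cast
      ring
    rw [← himg, integral_image_eq_integral_abs_deriv_smul (f' := fun _ => Real.sin τ)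
      measurableSet_Ioo
      (fun x _ => by simpa using ((hasDerivAt_id x).const_mul (Real.sin τ)).hasDerivWithinAt)
      (fun a _ b _ hab => mul_left_cancel₀ hsp.ne' hab) _,
      setIntegral_congr_fun measurableSet_Ioo hcong, integral_const_mul, ← mul_assoc,
      ← Complex.cpow_add _ _ hsne,
      show ((N:ℂ) + 1 - s) + (s-(N:ℂ)-1) = 0 by ring, Complex.cpow_zero, one_mul]
  -- pointwise identity for the LHS integrand
  have hL : Set.EqOn (fun t : ℝ => (t:ℂ)^(s-(N:ℂ)-2) *
      ((volume (embNbhd N A t ∩ Ω ×ˢ Set.Ioo (-1:ℝ) 1)).toReal : ℂ))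
      (fun t : ℝ => 2 * ∫ τ in Set.Ioo (0:ℝ) (Real.pi/2), F t τ) (Set.Ioo 0 δ) := by
    intro t htt
    have htne : (t:ℂ) ≠ 0 := Complex.ofReal_ne_zero.mpr htt.1.ne'
    have hpow : (t:ℂ)^(s-(N:ℂ)-1) = (t:ℂ)^(s-(N:ℂ)-2) * (t:ℂ) := by
      rw [show s-(N:ℂ)-1 = (s-(N:ℂ)-2) + 1 by ring, Complex.cpow_add _ _ htne,
        Complex.cpow_one]
    have hreal : (∫ τ in Set.Ioo (0:ℝ) (Real.pi/2),
        (t * Real.sin τ) * (volume (Metric.thickening (t * Real.sin τ) A ∩ Ω)).toReal)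
        = t * ∫ τ in Set.Ioo (0:ℝ) (Real.pi/2),
            Real.sin τ * (volume (Metric.thickening (t * Real.sin τ) A ∩ Ω)).toReal := by
      simp_rw [mul_assoc]
      exact integral_const_mul t _
    have hS : (∫ τ in Set.Ioo (0:ℝ) (Real.pi/2), F t τ)
        = (t:ℂ)^(s-(N:ℂ)-1) * ((∫ τ in Set.Ioo (0:ℝ) (Real.pi/2),
            Real.sin τ * (volume (Metric.thickening (t * Real.sin τ) A ∩ Ω)).toReal : ℝ) : ℂ) := by
      simp only [hF]
      rw [integral_const_mul]
      congr 1
      exact integral_ofReal (𝕜 := ℂ)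
    show (t:ℂ)^(s-(N:ℂ)-2) *
        ((volume (embNbhd N A t ∩ Ω ×ˢ Set.Ioo (-1:ℝ) 1)).toReal : ℂ)
        = 2 * ∫ τ in Set.Ioo (0:ℝ) (Real.pi/2), F t τ
    rw [W_eq hA hΩo hΩv htt.1 (lt_trans htt.2 hδ1), hreal, hS]
    push_cast
    rw [hpow]
    ring
  -- conjunct 1
  have hWmeas : Measurable fun t : ℝ =>
      (volume (embNbhd N A t ∩ Ω ×ˢ Set.Ioo (-1:ℝ) 1)).toReal := by
    apply ENNReal.measurable_toReal.comp
    have hmono : Monotone fun t : ℝ => volume (embNbhd N A t ∩ Ω ×ˢ Set.Ioo (-1:ℝ) 1) :=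
      fun a b hab => measure_mono (inter_subset_inter_left _ (fun p hp => lt_of_lt_of_le hp hab))
    exact hmono.measurable
  have h1 : IntegrableOn (fun t : ℝ => (t : ℂ) ^ (s - (N : ℂ) - 2) *
      ((volume (embNbhd N A t ∩ Ω ×ˢ Set.Ioo (-1 : ℝ) 1)).toReal : ℂ))
      (Set.Ioo 0 δ) volume := by
    have hdom : IntegrableOn (fun t : ℝ => (2*C) * t ^ (s.re - r - 1))
        (Set.Ioo 0 δ) volume :=
      ((intervalIntegral.integrableOn_Ioo_rpow_iff hδ0).mpr (by linarith)).const_mul _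
    have hmW : Measurable fun t : ℝ => (t : ℂ) ^ (s - (N:ℂ) - 2) *
        ((volume (embNbhd N A t ∩ Ω ×ˢ Set.Ioo (-1:ℝ) 1)).toReal : ℂ) :=
      (Complex.measurable_ofReal.pow measurable_const).mul
        (Complex.measurable_ofReal.comp hWmeas)
    apply Integrable.mono' hdom hmW.aestronglyMeasurable
    filter_upwards [ae_restrict_mem measurableSet_Ioo] with t htt
    have hW2 : (volume (embNbhd N A t ∩ Ω ×ˢ Set.Ioo (-1:ℝ) 1)).toReal
        ≤ 2 * t * (volume (Metric.thickening t A ∩ Ω)).toReal := by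
      have hsub : embNbhd N A t ∩ Ω ×ˢ Set.Ioo (-1:ℝ) 1
          ⊆ (Metric.thickening t A ∩ Ω) ×ˢ Set.Ioo (-t) t := by
        rintro ⟨x, y⟩ ⟨hq1, hq2, hq3⟩
        have h4 : Real.sqrt (Metric.infDist x A ^2 + y^2) < t := hq1
        have hds : Metric.infDist x A ≤ Real.sqrt (Metric.infDist x A ^2 + y^2) := by
          nth_rewrite 1 [← Real.sqrt_sq (infDist_nonneg (s := A) (x := x))]
          exact Real.sqrt_le_sqrt (by nlinarith [sq_nonneg y])
        have hys : |y| ≤ Real.sqrt (Metric.infDist x A ^2 + y^2) := by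
          rw [← Real.sqrt_sq_eq_abs]
          exact Real.sqrt_le_sqrt (by nlinarith [sq_nonneg (Metric.infDist x A)])
        exact ⟨⟨(mem_thickening_iff_infDist_lt hA).mpr (lt_of_le_of_lt hds h4), hq2⟩,
          Set.mem_Ioo.mpr (abs_lt.mp (lt_of_le_of_lt hys h4))⟩
      have hprod : volume ((Metric.thickening t A ∩ Ω) ×ˢ Set.Ioo (-t) t)
          = volume (Metric.thickening t A ∩ Ω) * ENNReal.ofReal (2*t) := by
        rw [Measure.volume_eq_prod _ _, Measure.prod_prod, Real.volume_Ioo]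
        congr 1; ring
      have hfin : volume (Metric.thickening t A ∩ Ω) * ENNReal.ofReal (2*t) ≠ ⊤ :=
        ENNReal.mul_ne_top (lt_of_le_of_lt (measure_mono inter_subset_right) hΩv).ne
          ENNReal.ofReal_ne_top
      calc (volume (embNbhd N A t ∩ Ω ×ˢ Set.Ioo (-1:ℝ) 1)).toReal
          ≤ (volume (Metric.thickening t A ∩ Ω) * ENNReal.ofReal (2*t)).toReal :=
            ENNReal.toReal_mono hfin (hprod ▸ measure_mono hsub)
        _ = 2 * t * (volume (Metric.thickening t A ∩ Ω)).toReal := by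
            rw [ENNReal.toReal_mul, ENNReal.toReal_ofReal
              (mul_nonneg (by norm_num) htt.1.le)]; ring
    have hbt := hbd t ⟨htt.1, le_of_lt (lt_trans htt.2 hδ1)⟩
    rw [norm_mul, Complex.norm_cpow_eq_rpow_re_of_pos htt.1,
      Complex.norm_real, Real.norm_eq_abs, abs_of_nonneg ENNReal.toReal_nonneg,
      show (s - (N:ℂ) - 2).re = s.re - (N:ℝ) - 2 by simp [Complex.sub_re, Complex.natCast_re]]
    calc t ^ (s.re - (N:ℝ) - 2) *
          (volume (embNbhd N A t ∩ Ω ×ˢ Set.Ioo (-1:ℝ) 1)).toReal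
        ≤ t ^ (s.re - (N:ℝ) - 2) * (2 * t * (C * t ^ ((N:ℝ) - r))) := by
          apply mul_le_mul_of_nonneg_left _ (Real.rpow_nonneg htt.1.le _)
          calc (volume (embNbhd N A t ∩ Ω ×ˢ Set.Ioo (-1:ℝ) 1)).toReal
              ≤ 2 * t * (volume (Metric.thickening t A ∩ Ω)).toReal := hW2
            _ ≤ 2 * t * (C * t ^ ((N:ℝ) - r)) :=
                mul_le_mul_of_nonneg_left hbt (mul_nonneg (by norm_num) htt.1.le)
      _ = (2*C) * t ^ (s.re - r - 1) := by
          rw [show s.re - r - 1 = ((s.re - (N:ℝ) - 2) + 1) + ((N:ℝ) - r) by ring,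
            Real.rpow_add htt.1, Real.rpow_add htt.1, Real.rpow_one]
          ring
  -- conjunct 3
  have h3' : Integrable (fun τ : ℝ => ∫ t, Function.uncurry F (t, τ)
      ∂(volume.restrict (Set.Ioo (0:ℝ) δ)))
      (volume.restrict (Set.Ioo (0:ℝ) (Real.pi/2))) :=
    hFint.integral_prod_right
  have h3 : IntegrableOn
      (fun τ : ℝ => (Real.sin τ : ℂ) ^ ((N : ℂ) + 1 - s) *
        ∫ t in Set.Ioo (0 : ℝ) (δ * Real.sin τ), (t : ℂ) ^ (s - (N : ℂ) - 1) *
          ((volume (Metric.thickening t A ∩ Ω)).toReal : ℂ))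
      (Set.Ioo 0 (Real.pi / 2)) volume := by
    apply h3'.congr
    filter_upwards [ae_restrict_mem measurableSet_Ioo] with τ hτ
    exact (hZ τ hτ).symm
  refine ⟨h1, h2, h3, ?_⟩
  calc ∫ t in Set.Ioo (0 : ℝ) δ, (t : ℂ) ^ (s - (N : ℂ) - 2) *
          ((volume (embNbhd N A t ∩ Ω ×ˢ Set.Ioo (-1 : ℝ) 1)).toReal : ℂ)
      = ∫ t in Set.Ioo (0:ℝ) δ, 2 * ∫ τ in Set.Ioo (0:ℝ) (Real.pi/2), F t τ :=
        setIntegral_congr_fun measurableSet_Ioo hL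
    _ = 2 * ∫ t in Set.Ioo (0:ℝ) δ, ∫ τ in Set.Ioo (0:ℝ) (Real.pi/2), F t τ :=
        integral_const_mul 2 _
    _ = 2 * ∫ τ in Set.Ioo (0:ℝ) (Real.pi/2), ∫ t in Set.Ioo (0:ℝ) δ, F t τ := by
        rw [integral_integral_swap hFint]
    _ = 2 * ∫ τ in Set.Ioo (0 : ℝ) (Real.pi / 2),
          (Real.sin τ : ℂ) ^ ((N : ℂ) + 1 - s) *
            ∫ t in Set.Ioo (0 : ℝ) (δ * Real.sin τ), (t : ℂ) ^ (s - (N : ℂ) - 1) *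
              ((volume (Metric.thickening t A ∩ Ω)).toReal : ℂ) := by
        congr 1
        exact setIntegral_congr_fun measurableSet_Ioo fun τ hτ => (hZ τ hτ).symm
end
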